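/- arXiv:1809.01509 — 6 statements merged into one kernel-verified Lean document; each statement's English description precedes it below -/
import Mathlib

section
/- Let (Y, 𝒜, μ) and (Z, ℬ, ν) be σ-finite measure spaces, let (v_j)_{j∈J} be a Hilbert basis (complete orthonormal family) of L²(Y, μ; ℂ) and (w_m)_{m∈M} a Hilbert basis of L²(Z, ν; ℂ). Then the family of functions ((y,z) ↦ v_j(y)·w_m(z)) indexed by (j,m) ∈ J × M is a Hilbert basis of L²(Y × Z, μ ⊗ ν; ℂ). -/
noncomputable section

open MeasureTheory ComplexConjugate Classical

section Aux

open Filter Set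

variable {Y Z : Type*} [MeasurableSpace Y] [MeasurableSpace Z]

private lemma memLp_conj {μ : Measure Y} {f : Y → ℂ} (hf : MemLp f 2 μ) :
    MemLp (fun y => conj (f y)) 2 μ :=
  hf.of_le_mul (c := 1)
    (Complex.continuous_conj.comp_aestronglyMeasurable hf.1)
    (Eventually.of_forall fun x => by simp)

private lemma integrable_mul_L2 {μ : Measure Y} {f g : Y → ℂ} (hf : MemLp f 2 μ)
    (hg : MemLp g 2 μ) : Integrable (fun y => f y * g y) μ := by
  rw [← memLp_one_iff_integrable]
  have h := MemLp.smul (p := 2) (q := 2) (r := 1) hg hf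
    (hpqr := ⟨by rw [ENNReal.inv_two_add_inv_two, inv_one]⟩)
  simpa [smul_eq_mul, Pi.mul_def] using h

private lemma memLp_prod_mul (μ : Measure Y) (ν : Measure Z) [SigmaFinite μ] [SigmaFinite ν]
    {a : Y → ℂ} {b : Z → ℂ} (ha : MemLp a 2 μ) (hb : MemLp b 2 ν) :
    MemLp (fun x : Y × Z => a x.1 * b x.2) 2 (μ.prod ν) := by
  have hm : AEStronglyMeasurable (fun x : Y × Z => a x.1 * b x.2) (μ.prod ν) :=
    ha.1.comp_fst.mul hb.1.comp_snd
  rw [memLp_two_iff_integrable_sq_norm hm]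
  have heq : (fun x : Y × Z => ‖a x.1 * b x.2‖ ^ 2)
      = fun x : Y × Z => (‖a x.1‖ ^ 2) * (‖b x.2‖ ^ 2) := by
    funext x; rw [norm_mul]; ring
  rw [heq]
  exact Integrable.mul_prod ((memLp_two_iff_integrable_sq_norm ha.1).mp ha)
    ((memLp_two_iff_integrable_sq_norm hb.1).mp hb)

private lemma conj_exp_two : (2 : ℝ).HolderConjugate 2 :=
  Real.HolderConjugate.two_two

/-- The "partial inner product" of an `L²(μ ⊗ ν)` function with an `L²(μ)` function,
taken in the first variable, is in `L²(ν)`. -/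
private lemma memLp_partial (μ : Measure Y) (ν : Measure Z) [SigmaFinite μ] [SigmaFinite ν]
    {φ : Y → ℂ} (hφ : MemLp φ 2 μ) {f : Y × Z → ℂ} (hf : MemLp f 2 (μ.prod ν)) :
    MemLp (fun z => ∫ y, conj (φ y) * f (y, z) ∂μ) 2 ν := by
  have hfswap : MemLp (f ∘ Prod.swap) 2 (ν.prod μ) :=
    hf.comp_measurePreserving Measure.measurePreserving_swap
  -- measurability of the partial integral
  have hFm : AEStronglyMeasurable (fun p : Z × Y => conj (φ p.2) * (f ∘ Prod.swap) p)
      (ν.prod μ) := ((memLp_conj hφ).1.comp_snd).mul hfswap.1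
  have hgm : AEStronglyMeasurable (fun z => ∫ y, conj (φ y) * f (y, z) ∂μ) ν := by
    have h := hFm.integral_prod_right'
    simpa [Function.comp] using h
  -- integrable majorant
  have hsq : Integrable (fun p : Z × Y => ‖(f ∘ Prod.swap) p‖ ^ 2) (ν.prod μ) :=
    (memLp_two_iff_integrable_sq_norm hfswap.1).mp hfswap
  have hG : Integrable (fun z => ∫ y, ‖f (y, z)‖ ^ 2 ∂μ) ν := by
    have h := hsq.integral_prod_left
    simpa [Function.comp] using h
  have hφsq : Integrable (fun y => ‖φ y‖ ^ 2) μ :=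
    (memLp_two_iff_integrable_sq_norm hφ.1).mp hφ
  set A : ℝ := ∫ y, ‖φ y‖ ^ 2 ∂μ with hA
  have hA0 : 0 ≤ A := integral_nonneg fun y => sq_nonneg _
  -- sections
  have hsec_m : ∀ᵐ z ∂ν, AEStronglyMeasurable (fun y => f (y, z)) μ := by
    have h := hfswap.1.prodMk_left
    simpa [Function.comp] using h
  have hsec_i : ∀ᵐ z ∂ν, Integrable (fun y => ‖f (y, z)‖ ^ 2) μ := by
    have h := hsq.prod_right_ae
    simpa [Function.comp] using h
  -- pointwise bound
  have hbound : ∀ᵐ z ∂ν, ‖‖∫ y, conj (φ y) * f (y, z) ∂μ‖ ^ 2‖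
      ≤ A * ∫ y, ‖f (y, z)‖ ^ 2 ∂μ := by
    filter_upwards [hsec_m, hsec_i] with z hzm hzi
    have hzmem : MemLp (fun y => f (y, z)) 2 μ :=
      (memLp_two_iff_integrable_sq_norm hzm).mpr hzi
    set B : ℝ := ∫ y, ‖f (y, z)‖ ^ 2 ∂μ with hB
    have hB0 : 0 ≤ B := integral_nonneg fun y => sq_nonneg _
    have h1 : ‖∫ y, conj (φ y) * f (y, z) ∂μ‖ ≤ ∫ y, ‖φ y‖ * ‖f (y, z)‖ ∂μ := by
      refine (norm_integral_le_integral_norm _).trans_eq ?_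
      refine integral_congr_ae (Eventually.of_forall fun y => ?_)
      simp [norm_mul, RCLike.norm_conj]
    have h2 : ∫ y, ‖φ y‖ * ‖f (y, z)‖ ∂μ
        ≤ (∫ y, ‖φ y‖ ^ (2 : ℝ) ∂μ) ^ (1 / 2 : ℝ) * (∫ y, ‖f (y, z)‖ ^ (2 : ℝ) ∂μ) ^ (1 / 2 : ℝ) := by
      have h2' : ENNReal.ofReal (2 : ℝ) = 2 := by norm_num
      exact integral_mul_norm_le_Lp_mul_Lq conj_exp_two (by rwa [h2']) (by rwa [h2'])
    have hpow : ∀ x : ℝ, x ^ (2 : ℝ) = x ^ 2 := fun x => by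
      rw [show (2 : ℝ) = ((2 : ℕ) : ℝ) by norm_num, Real.rpow_natCast]
    simp only [hpow] at h2
    have h3 : ‖∫ y, conj (φ y) * f (y, z) ∂μ‖ ≤ A ^ (1 / 2 : ℝ) * B ^ (1 / 2 : ℝ) :=
      h1.trans h2
    have h4 : (A ^ (1 / 2 : ℝ) * B ^ (1 / 2 : ℝ)) ^ 2 = A * B := by
      rw [mul_pow, ← Real.rpow_natCast (A ^ (1 / 2 : ℝ)) 2, ← Real.rpow_natCast (B ^ (1 / 2 : ℝ)) 2,
        ← Real.rpow_mul hA0, ← Real.rpow_mul hB0]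
      norm_num
    have h5 : ‖∫ y, conj (φ y) * f (y, z) ∂μ‖ ^ 2 ≤ A * B := by
      rw [← h4]
      exact pow_le_pow_left₀ (norm_nonneg _) h3 2
    calc ‖‖∫ y, conj (φ y) * f (y, z) ∂μ‖ ^ 2‖ = ‖∫ y, conj (φ y) * f (y, z) ∂μ‖ ^ 2 := by
          rw [Real.norm_of_nonneg (sq_nonneg _)]
      _ ≤ A * B := h5
  -- conclude
  rw [memLp_two_iff_integrable_sq_norm hgm]
  exact Integrable.mono' (hG.const_mul A)
    (by simpa [pow_two, Pi.mul_def] using (hgm.norm.mul hgm.norm)) hbound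

/-- Fubini identity for `∫ conj (φ ⊗ ψ) f` over the product measure. -/
private lemma integral_conj_prod_mul (μ : Measure Y) (ν : Measure Z)
    [SigmaFinite μ] [SigmaFinite ν]
    {φ : Y → ℂ} {ψ : Z → ℂ} {f : Y × Z → ℂ}
    (hφ : MemLp φ 2 μ) (hψ : MemLp ψ 2 ν) (hf : MemLp f 2 (μ.prod ν)) :
    ∫ x : Y × Z, conj (φ x.1 * ψ x.2) * f x ∂(μ.prod ν)
      = ∫ z, conj (ψ z) * ∫ y, conj (φ y) * f (y, z) ∂μ ∂ν := by
  have hint : Integrable (fun x : Y × Z => (conj (φ x.1) * conj (ψ x.2)) * f x) (μ.prod ν) :=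
    integrable_mul_L2 (memLp_prod_mul μ ν (memLp_conj hφ) (memLp_conj hψ)) hf
  have heq : (fun x : Y × Z => conj (φ x.1 * ψ x.2) * f x)
      = fun x : Y × Z => (conj (φ x.1) * conj (ψ x.2)) * f x := by
    funext x; rw [map_mul]
  rw [heq, integral_prod_symm _ hint]
  refine integral_congr_ae (Filter.Eventually.of_forall fun z => ?_)
  calc (∫ x, conj (φ x) * conj (ψ z) * f (x, z) ∂μ)
      = ∫ x, conj (ψ z) * (conj (φ x) * f (x, z)) ∂μ :=
        integral_congr_ae (Filter.Eventually.of_forall fun y => by ring)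
    _ = conj (ψ z) * ∫ y, conj (φ y) * f (y, z) ∂μ := integral_const_mul _ _

end Aux

/-- if `(v j)_{j ∈ J}` is a Hilbert basis of `L²(Y, μ; ℂ)` and `(w m)_{m ∈ M}`
is a Hilbert basis of `L²(Z, ν; ℂ)` (orthonormal families that are complete, in the sense
that any `L²` function orthogonal to all members vanishes a.e.), then the tensor-product
family `((y,z) ↦ v j y · w m z)_{(j,m) ∈ J × M}` is a Hilbert basis of
`L²(Y × Z, μ ⊗ ν; ℂ)`. -/
theorem tensor_product_hilbert_basis
    {Y Z : Type*} [MeasurableSpace Y] [MeasurableSpace Z]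
    (μ : Measure Y) (ν : Measure Z) [SigmaFinite μ] [SigmaFinite ν]
    {J M : Type*} (v : J → Y → ℂ) (w : M → Z → ℂ)
    (hvmem : ∀ j, MemLp (v j) 2 μ) (hwmem : ∀ m, MemLp (w m) 2 ν)
    (hvorth : ∀ j j', ∫ y, conj (v j y) * v j' y ∂μ = if j = j' then 1 else 0)
    (hworth : ∀ m m', ∫ z, conj (w m z) * w m' z ∂ν = if m = m' then 1 else 0)
    (hvcomplete : ∀ f : Y → ℂ, MemLp f 2 μ →
      (∀ j, ∫ y, conj (v j y) * f y ∂μ = 0) → f =ᵐ[μ] 0)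
    (hwcomplete : ∀ g : Z → ℂ, MemLp g 2 ν →
      (∀ m, ∫ z, conj (w m z) * g z ∂ν = 0) → g =ᵐ[ν] 0) :
    (∀ jm : J × M,
        MemLp (fun x : Y × Z => v jm.1 x.1 * w jm.2 x.2) 2 (μ.prod ν)) ∧
    (∀ jm jm' : J × M,
        ∫ x : Y × Z, conj (v jm.1 x.1 * w jm.2 x.2) * (v jm'.1 x.1 * w jm'.2 x.2)
          ∂(μ.prod ν) = if jm = jm' then 1 else 0) ∧
    (∀ f : Y × Z → ℂ, MemLp f 2 (μ.prod ν) →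
      (∀ jm : J × M, ∫ x : Y × Z, conj (v jm.1 x.1 * w jm.2 x.2) * f x ∂(μ.prod ν) = 0) →
      f =ᵐ[μ.prod ν] 0) := by
  refine ⟨fun jm => memLp_prod_mul μ ν (hvmem jm.1) (hwmem jm.2), ?_, ?_⟩
  · -- orthonormality
    intro jm jm'
    have heq : (fun x : Y × Z => conj (v jm.1 x.1 * w jm.2 x.2) * (v jm'.1 x.1 * w jm'.2 x.2))
        = fun x : Y × Z =>
          (conj (v jm.1 x.1) * v jm'.1 x.1) * (conj (w jm.2 x.2) * w jm'.2 x.2) := by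
      funext x; rw [map_mul]; ring
    rw [heq, integral_prod_mul (fun y => conj (v jm.1 y) * v jm'.1 y)
      (fun z => conj (w jm.2 z) * w jm'.2 z), hvorth, hworth]
    by_cases h1 : jm.1 = jm'.1 <;> by_cases h2 : jm.2 = jm'.2 <;>
      simp [Prod.ext_iff, h1, h2]
  · -- completeness
    intro f hf horth
    -- Step 1: for each j, the partial inner product with v j vanishes a.e.
    have hg0 : ∀ j, (fun z => ∫ y, conj (v j y) * f (y, z) ∂μ) =ᵐ[ν] 0 := by
      intro j
      refine hwcomplete _ (memLp_partial μ ν (hvmem j) hf) fun m => ?_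
      have h := horth (j, m)
      rw [integral_conj_prod_mul μ ν (hvmem j) (hwmem m) hf] at h
      simpa using h
    -- Step 2: f is orthogonal to v j ⊗ ψ for every ψ ∈ L²(ν)
    have key : ∀ (j : J) (ψ : Z → ℂ), MemLp ψ 2 ν →
        ∫ x : Y × Z, conj (v j x.1 * ψ x.2) * f x ∂(μ.prod ν) = 0 := by
      intro j ψ hψ
      rw [integral_conj_prod_mul μ ν (hvmem j) hψ hf]
      have h0 : (fun z => conj (ψ z) * ∫ y, conj (v j y) * f (y, z) ∂μ) =ᵐ[ν] 0 := by
        filter_upwards [hg0 j] with z hz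
        simp only [Pi.zero_apply] at hz ⊢
        rw [hz, mul_zero]
      rw [integral_congr_ae h0]
      simp
    have hfswap : MemLp (f ∘ Prod.swap) 2 (ν.prod μ) :=
      hf.comp_measurePreserving Measure.measurePreserving_swap
    -- Step 3: f is orthogonal to φ ⊗ ψ for all φ ∈ L²(μ), ψ ∈ L²(ν)
    have hrect : ∀ (φ : Y → ℂ) (ψ : Z → ℂ), MemLp φ 2 μ → MemLp ψ 2 ν →
        ∫ x : Y × Z, conj (φ x.1 * ψ x.2) * f x ∂(μ.prod ν) = 0 := by
      intro φ ψ hφ hψ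
      have hh0 : (fun y => ∫ z, conj (ψ z) * f (y, z) ∂ν) =ᵐ[μ] 0 := by
        refine hvcomplete _ ?_ fun j => ?_
        · have h := memLp_partial ν μ hψ hfswap
          simpa [Function.comp] using h
        · have h1 := key j ψ hψ
          have h2 : ∫ x : Y × Z, conj (v j x.1 * ψ x.2) * f x ∂(μ.prod ν)
              = ∫ p : Z × Y, conj (ψ p.1 * v j p.2) * (f ∘ Prod.swap) p ∂(ν.prod μ) := by
            rw [← integral_prod_swap (fun x : Y × Z => conj (v j x.1 * ψ x.2) * f x)]
            refine integral_congr_ae (Filter.Eventually.of_forall fun p => ?_)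
            simp only [Prod.swap, Function.comp]
            rw [map_mul, map_mul]
            ring_nf
          rw [h2, integral_conj_prod_mul ν μ hψ (hvmem j) hfswap] at h1
          have h3 : (fun y => conj (v j y) * ∫ z, conj (ψ z) * (f ∘ Prod.swap) (z, y) ∂ν)
              = fun y => conj (v j y) * ∫ z, conj (ψ z) * f (y, z) ∂ν := rfl
          rw [h3] at h1
          exact h1
      have h2 : ∫ x : Y × Z, conj (φ x.1 * ψ x.2) * f x ∂(μ.prod ν)
          = ∫ p : Z × Y, conj (ψ p.1 * φ p.2) * (f ∘ Prod.swap) p ∂(ν.prod μ) := by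
        rw [← integral_prod_swap (fun x : Y × Z => conj (φ x.1 * ψ x.2) * f x)]
        refine integral_congr_ae (Filter.Eventually.of_forall fun p => ?_)
        simp only [Prod.swap, Function.comp]
        rw [map_mul, map_mul]
        ring_nf
      rw [h2, integral_conj_prod_mul ν μ hψ hφ hfswap]
      have h3 : (fun y => conj (φ y) * ∫ z, conj (ψ z) * (f ∘ Prod.swap) (z, y) ∂ν) =ᵐ[μ] 0 := by
        filter_upwards [hh0] with y hy
        simp only [Pi.zero_apply] at hy ⊢
        have : (∫ z, conj (ψ z) * (f ∘ Prod.swap) (z, y) ∂ν)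
            = ∫ z, conj (ψ z) * f (y, z) ∂ν := rfl
        rw [this, hy, mul_zero]
      rw [integral_congr_ae h3]
      simp
    -- Step 4: the integral of f over finite-measure rectangles vanishes
    have hind : ∀ (A : Set Y) (B : Set Z), MeasurableSet A → MeasurableSet B →
        μ A ≠ ⊤ → ν B ≠ ⊤ → ∫ x in A ×ˢ B, f x ∂(μ.prod ν) = 0 := by
      intro A B hA hB hAf hBf
      have hφ : MemLp (A.indicator fun _ => (1 : ℂ)) 2 μ :=
        memLp_indicator_const 2 hA 1 (Or.inr hAf)
      have hψ : MemLp (B.indicator fun _ => (1 : ℂ)) 2 ν :=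
        memLp_indicator_const 2 hB 1 (Or.inr hBf)
      have h := hrect _ _ hφ hψ
      rw [← integral_indicator (hA.prod hB), ← h]
      refine integral_congr_ae (Filter.Eventually.of_forall fun x => ?_)
      by_cases h1 : x.1 ∈ A <;> by_cases h2 : x.2 ∈ B <;>
        simp [Set.indicator, Set.mem_prod, h1, h2]
    -- integrability on finite-measure sets
    have hfint : ∀ s : Set (Y × Z), MeasurableSet s → (μ.prod ν) s < ⊤ →
        IntegrableOn f s (μ.prod ν) := by
      intro s _ hsf
      haveI : Fact ((μ.prod ν) s < ⊤) := ⟨hsf⟩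
      exact (hf.restrict s).integrable one_le_two
    -- spanning rectangles
    set Q : ℕ → Set (Y × Z) := fun n => spanningSets μ n ×ˢ spanningSets ν n with hQdef
    have hQm : ∀ n, MeasurableSet (Q n) := fun n =>
      (measurableSet_spanningSets μ n).prod (measurableSet_spanningSets ν n)
    have hQf : ∀ n, (μ.prod ν) (Q n) < ⊤ := by
      intro n
      rw [hQdef]
      simp only [Measure.prod_prod]
      exact ENNReal.mul_lt_top (measure_spanningSets_lt_top μ n)
        (measure_spanningSets_lt_top ν n)
    have hQmono : Monotone Q := fun a b hab =>
      Set.prod_mono (monotone_spanningSets μ hab) (monotone_spanningSets ν hab)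
    have hQunion : ⋃ n, Q n = Set.univ := by
      ext x
      simp only [Set.mem_iUnion, Set.mem_univ, iff_true, hQdef, Set.mem_prod]
      obtain ⟨n1, h1⟩ : ∃ n, x.1 ∈ spanningSets μ n := by
        have h := iUnion_spanningSets μ
        have : x.1 ∈ ⋃ n, spanningSets μ n := h ▸ Set.mem_univ _
        exact Set.mem_iUnion.mp this
      obtain ⟨n2, h2⟩ : ∃ n, x.2 ∈ spanningSets ν n := by
        have h := iUnion_spanningSets ν
        have : x.2 ∈ ⋃ n, spanningSets ν n := h ▸ Set.mem_univ _
        exact Set.mem_iUnion.mp this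
      exact ⟨max n1 n2, monotone_spanningSets μ (le_max_left _ _) h1,
        monotone_spanningSets ν (le_max_right _ _) h2⟩
    -- Step 5: π-system induction: integral over s ∩ Q n vanishes
    have hQzero : ∀ n, ∀ s : Set (Y × Z), MeasurableSet s →
        ∫ x in s ∩ Q n, f x ∂(μ.prod ν) = 0 := by
      intro n
      have hQint : IntegrableOn f (Q n) (μ.prod ν) := hfint _ (hQm n) (hQf n)
      have hQ0 : ∫ x in Q n, f x ∂(μ.prod ν) = 0 :=
        hind _ _ (measurableSet_spanningSets μ n) (measurableSet_spanningSets ν n)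
          (measure_spanningSets_lt_top μ n).ne (measure_spanningSets_lt_top ν n).ne
      refine MeasurableSpace.induction_on_inter
        (C := fun s _ => ∫ x in s ∩ Q n, f x ∂(μ.prod ν) = 0)
        generateFrom_prod.symm isPiSystem_prod ?_ ?_ ?_ ?_
      · simp
      · rintro t ⟨A, hA, B, hB, rfl⟩
        simp only [Set.mem_setOf_eq] at hA hB
        have hABQ : A ×ˢ B ∩ Q n = (A ∩ spanningSets μ n) ×ˢ (B ∩ spanningSets ν n) := by
          rw [hQdef, Set.prod_inter_prod]
        rw [hABQ]
        refine hind _ _ (hA.inter (measurableSet_spanningSets μ n))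
          (hB.inter (measurableSet_spanningSets ν n)) ?_ ?_
        · exact ((measure_mono Set.inter_subset_right).trans_lt
            (measure_spanningSets_lt_top μ n)).ne
        · exact ((measure_mono Set.inter_subset_right).trans_lt
            (measure_spanningSets_lt_top ν n)).ne
      · intro t ht hC
        have hdiff : tᶜ ∩ Q n = Q n \ (t ∩ Q n) := by
          ext x
          simp only [Set.mem_inter_iff, Set.mem_compl_iff, Set.mem_diff]
          tauto
        rw [hdiff, integral_diff (ht.inter (hQm n)) hQint Set.inter_subset_right, hC, hQ0,
          sub_zero]
      · intro g hdisj hgm hC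
        rw [Set.iUnion_inter]
        rw [integral_iUnion (fun i => (hgm i).inter (hQm n))
          (hdisj.mono fun i j h => h.mono Set.inter_subset_left Set.inter_subset_left)
          (hQint.mono_set (Set.iUnion_subset fun i => Set.inter_subset_right))]
        simp [hC]
    -- Step 6: integral of f over every finite-measure set vanishes
    have hall : ∀ s : Set (Y × Z), MeasurableSet s → (μ.prod ν) s < ⊤ →
        ∫ x in s, f x ∂(μ.prod ν) = 0 := by
      intro s hs hsf
      have hmono : Monotone fun n => s ∩ Q n := fun a b hab =>
        Set.inter_subset_inter_right _ (hQmono hab)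
      have hunion : ⋃ n, s ∩ Q n = s := by
        rw [← Set.inter_iUnion, hQunion, Set.inter_univ]
      have hint : IntegrableOn f (⋃ n, s ∩ Q n) (μ.prod ν) := by
        rw [hunion]; exact hfint s hs hsf
      have ht := tendsto_setIntegral_of_monotone (fun n => hs.inter (hQm n)) hmono hint
      rw [hunion] at ht
      rw [show (fun n => ∫ x in s ∩ Q n, f x ∂(μ.prod ν)) = fun _ => (0 : ℂ) from
        funext fun n => hQzero n s hs] at ht
      exact tendsto_nhds_unique ht tendsto_const_nhds
    exact ae_eq_zero_of_forall_setIntegral_eq_of_sigmaFinite hfint hall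

end
end

section
/- Let Q = (0,π)³ and let u : [0,π]³ → ℝ³ be continuous on the closed cube and C¹ on Q with div u = 0 on Q, satisfying the perfectly conducting boundary conditions (for each face {x_i ∈ {0,π}} the two components u_j with j ≠ i vanish on that face). Suppose u is L²-orthogonal on Q to every TE field E^{TE}_{k₁k₂k₃}(x) = (−k₂ cos(k₁x₁) sin(k₂x₂) sin(k₃x₃), k₁ sin(k₁x₁) cos(k₂x₂) sin(k₃x₃), 0) with k₁,k₂ ∈ ℕ not both zero and k₃ ≥ 1, and to every TM field E^{TM}_{k₁k₂k₃}(x) = (−k₁k₃ cos(k₁x₁) sin(k₂x₂) sin(k₃x₃), −k₂k₃ sin(k₁x₁) cos(k₂x₂) sin(k₃x₃), (k₁²+k₂²) sin(k₁x₁) sin(k₂x₂) cos(k₃x₃)) with k₁,k₂ ≥ 1 and k₃ ∈ ℕ. Then u = 0 on Q. -/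
noncomputable section

open Real Set MeasureTheory

/-- Three-dimensional Euclidean space. -/
abbrev V3 : Type := EuclideanSpace ℝ (Fin 3)
/-- Two-dimensional Euclidean space. -/
abbrev V2 : Type := EuclideanSpace ℝ (Fin 2)

/-- Partial derivative `∂ᵢf` of a scalar function on `ℝ³` (indices `0,1,2` correspond to
`∂₁,∂₂,∂₃`). -/
def pd3 (i : Fin 3) (f : V3 → ℝ) (x : V3) : ℝ := fderiv ℝ f x (EuclideanSpace.single i 1)

/-- Partial derivative `∂ᵢf` of a scalar function on `ℝ²`. -/
def pd2 (i : Fin 2) (f : V2 → ℝ) (x : V2) : ℝ := fderiv ℝ f x (EuclideanSpace.single i 1)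

/-- The curl of a vector field `u = (u₁,u₂,u₃)` on `ℝ³`:
`curl u = (∂₂u₃ − ∂₃u₂, ∂₃u₁ − ∂₁u₃, ∂₁u₂ − ∂₂u₁)`. -/
def curl3 (u : V3 → Fin 3 → ℝ) (x : V3) : Fin 3 → ℝ :=
  ![pd3 1 (fun y => u y 2) x - pd3 2 (fun y => u y 1) x,
    pd3 2 (fun y => u y 0) x - pd3 0 (fun y => u y 2) x,
    pd3 0 (fun y => u y 1) x - pd3 1 (fun y => u y 0) x]

/-- The divergence `div u = ∂₁u₁ + ∂₂u₂ + ∂₃u₃` of a vector field on `ℝ³`. -/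
def div3 (u : V3 → Fin 3 → ℝ) (x : V3) : ℝ :=
  pd3 0 (fun y => u y 0) x + pd3 1 (fun y => u y 1) x + pd3 2 (fun y => u y 2) x

/-- The Laplacian `Δf = ∂₁²f + ∂₂²f + ∂₃²f` of a scalar function on `ℝ³`. -/
def lap3 (f : V3 → ℝ) (x : V3) : ℝ :=
  pd3 0 (pd3 0 f) x + pd3 1 (pd3 1 f) x + pd3 2 (pd3 2 f) x

/-- The gradient of a scalar function on `ℝ³`. -/
def grad3 (f : V3 → ℝ) (x : V3) : Fin 3 → ℝ := ![pd3 0 f x, pd3 1 f x, pd3 2 f x]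

/-- The cross product of two vectors of `ℝ³` (as triples of reals). -/
def cross3 (a b : Fin 3 → ℝ) : Fin 3 → ℝ :=
  ![a 1 * b 2 - a 2 * b 1, a 2 * b 0 - a 0 * b 2, a 0 * b 1 - a 1 * b 0]

/-- The transverse Laplacian `Δ⊥f = ∂₁²f + ∂₂²f` of a scalar function on `ℝ²`. -/
def lapPerp (f : V2 → ℝ) (x : V2) : ℝ := pd2 0 (pd2 0 f) x + pd2 1 (pd2 1 f) x

/-- The transverse part `x⊥ = (x₁,x₂)` of a point `x = (x₁,x₂,x₃) ∈ ℝ³`. -/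
def perp (x : V3) : V2 := WithLp.toLp 2 ![x 0, x 1]

/-- The TE eigenfield of the cube `(0,π)³` with integer frequencies `(k₁,k₂,k₃)`:
`E(x) = (−k₂ cos(k₁x₁) sin(k₂x₂) sin(k₃x₃), k₁ sin(k₁x₁) cos(k₂x₂) sin(k₃x₃), 0)`. -/
def ETEcube (k₁ k₂ k₃ : ℕ) (x : V3) : Fin 3 → ℝ :=
  ![-(k₂ : ℝ) * Real.cos (k₁ * x 0) * Real.sin (k₂ * x 1) * Real.sin (k₃ * x 2),
    (k₁ : ℝ) * Real.sin (k₁ * x 0) * Real.cos (k₂ * x 1) * Real.sin (k₃ * x 2), 0]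

/-- The TM eigenfield of the cube `(0,π)³` with integer frequencies `(k₁,k₂,k₃)`:
`E(x) = (−k₁k₃ cos sin sin, −k₂k₃ sin cos sin, (k₁²+k₂²) sin sin cos)`. -/
def ETMcube (k₁ k₂ k₃ : ℕ) (x : V3) : Fin 3 → ℝ :=
  ![-((k₁ : ℝ) * k₃) * Real.cos (k₁ * x 0) * Real.sin (k₂ * x 1) * Real.sin (k₃ * x 2),
    -((k₂ : ℝ) * k₃) * Real.sin (k₁ * x 0) * Real.cos (k₂ * x 1) * Real.sin (k₃ * x 2),
    ((k₁ : ℝ) ^ 2 + (k₂ : ℝ) ^ 2) * Real.sin (k₁ * x 0) * Real.sin (k₂ * x 1) *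
      Real.cos (k₃ * x 2)]

def Q3 : Set V3 := {x | ∀ i, x i ∈ Set.Ioo 0 π}
def C3 : Set V3 := {x | ∀ i, x i ∈ Set.Icc 0 π}

lemma contCoord (i : Fin 3) : Continuous fun x : V3 => x i := (EuclideanSpace.proj i).continuous

lemma isOpen_Q3 : IsOpen Q3 := by
  have : Q3 = ⋂ i, (fun x : V3 => x i) ⁻¹' (Set.Ioo 0 π) := by
    ext x; simp [Q3, Set.mem_iInter]
  rw [this]
  exact isOpen_iInter_of_finite fun i => isOpen_Ioo.preimage (contCoord i)

lemma isCompact_C3 : IsCompact C3 := by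
  have h := (isCompact_univ_pi (fun _ : Fin 3 => isCompact_Icc (a := (0:ℝ)) (b := π))).image
    (PiLp.continuousLinearEquiv 2 ℝ (fun _ : Fin 3 => ℝ)).symm.continuous
  convert h using 1
  ext x
  constructor
  · intro hx
    refine ⟨(PiLp.continuousLinearEquiv 2 ℝ (fun _ : Fin 3 => ℝ)) x, ?_, rfl⟩
    rw [Set.mem_univ_pi]
    intro i
    exact hx i
  · rintro ⟨y, hy, rfl⟩ i
    simpa using hy i (Set.mem_univ i)

lemma Q3_subset_C3 : Q3 ⊆ C3 := fun x hx i => Ioo_subset_Icc_self (hx i)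

lemma intQ3 {v h : V3 → ℝ} (hv : ContinuousOn v C3) (hh : ContinuousOn h C3) :
    IntegrableOn (fun x => v x * h x) Q3 volume :=
  ((hv.mul hh).integrableOn_compact isCompact_C3).mono_set Q3_subset_C3

/-- sine family -/
def Sf (k : ℕ) : C(ℝ, ℝ) := ⟨fun t => Real.sin (k * t), (Real.continuous_sin.comp
  (continuous_const.mul continuous_id))⟩
/-- cosine family -/
def Cf (k : ℕ) : C(ℝ, ℝ) := ⟨fun t => Real.cos (k * t), (Real.continuous_cos.comp
  (continuous_const.mul continuous_id))⟩
def cosC : C(ℝ, ℝ) := ⟨Real.cos, Real.continuous_cos⟩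
def sinC : C(ℝ, ℝ) := ⟨Real.sin, Real.continuous_sin⟩

lemma mul_cos_mem_S {f : C(ℝ, ℝ)} (hf : f ∈ Submodule.span ℝ (Set.range Sf)) :
    cosC * f ∈ Submodule.span ℝ (Set.range Sf) := by
  induction hf using Submodule.span_induction with
  | mem z hz =>
    obtain ⟨k, rfl⟩ := hz
    match k with
    | 0 =>
      have : cosC * Sf 0 = 0 := by
        ext t; simp [cosC, Sf]
      rw [this]; exact Submodule.zero_mem _
    | (k+1) =>
      have : cosC * Sf (k+1) = (1/2 : ℝ) • (Sf (k+2) + Sf k) := by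
        ext t
        have h1 : ((k:ℝ)+2) * t = ((k+1:ℝ) * t) + t := by ring
        have h2 : (k:ℝ) * t = ((k+1:ℝ) * t) - t := by ring
        simp only [cosC, Sf, ContinuousMap.mul_apply, ContinuousMap.smul_apply,
          ContinuousMap.add_apply, ContinuousMap.coe_mk, smul_eq_mul]
        push_cast
        rw [h1, h2, Real.sin_add, Real.sin_sub]
        ring
      rw [this]
      exact Submodule.smul_mem _ _ (Submodule.add_mem _
        (Submodule.subset_span ⟨k+2, rfl⟩) (Submodule.subset_span ⟨k, rfl⟩))
  | zero =>
    rw [mul_zero]; exact Submodule.zero_mem _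
  | add a b _ _ ha hb =>
    rw [mul_add]; exact Submodule.add_mem _ ha hb
  | smul c a _ ha =>
    rw [mul_smul_comm]; exact Submodule.smul_mem _ _ ha

lemma mul_cos_mem_C {f : C(ℝ, ℝ)} (hf : f ∈ Submodule.span ℝ (Set.range Cf)) :
    cosC * f ∈ Submodule.span ℝ (Set.range Cf) := by
  induction hf using Submodule.span_induction with
  | mem z hz =>
    obtain ⟨k, rfl⟩ := hz
    match k with
    | 0 =>
      have : cosC * Cf 0 = Cf 1 := by
        ext t; simp [cosC, Cf]
      rw [this]; exact Submodule.subset_span ⟨1, rfl⟩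
    | (k+1) =>
      have : cosC * Cf (k+1) = (1/2 : ℝ) • (Cf (k+2) + Cf k) := by
        ext t
        have h1 : ((k:ℝ)+2) * t = ((k+1:ℝ) * t) + t := by ring
        have h2 : (k:ℝ) * t = ((k+1:ℝ) * t) - t := by ring
        simp only [cosC, Cf, ContinuousMap.mul_apply, ContinuousMap.smul_apply,
          ContinuousMap.add_apply, ContinuousMap.coe_mk, smul_eq_mul]
        push_cast
        rw [h1, h2, Real.cos_add, Real.cos_sub]
        ring
      rw [this]
      exact Submodule.smul_mem _ _ (Submodule.add_mem _
        (Submodule.subset_span ⟨k+2, rfl⟩) (Submodule.subset_span ⟨k, rfl⟩))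
  | zero =>
    rw [mul_zero]; exact Submodule.zero_mem _
  | add a b _ _ ha hb =>
    rw [mul_add]; exact Submodule.add_mem _ ha hb
  | smul c a _ ha =>
    rw [mul_smul_comm]; exact Submodule.smul_mem _ _ ha

lemma sin_cos_pow_mem (m : ℕ) :
    (sinC * cosC ^ m) ∈ Submodule.span ℝ (Set.range Sf) := by
  induction m with
  | zero =>
    have : sinC * cosC ^ 0 = Sf 1 := by
      ext t; simp [sinC, Sf]
    rw [this]; exact Submodule.subset_span ⟨1, rfl⟩
  | succ m ih =>
    have : sinC * cosC ^ (m+1) = cosC * (sinC * cosC ^ m) := by ring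
    rw [this]; exact mul_cos_mem_S ih

lemma cos_pow_mem (p : ℕ) :
    (cosC ^ p) ∈ Submodule.span ℝ (Set.range Cf) := by
  induction p with
  | zero =>
    have : cosC ^ 0 = Cf 0 := by
      ext t; simp [cosC, Cf]
    rw [this]; exact Submodule.subset_span ⟨0, rfl⟩
  | succ p ih =>
    have : cosC ^ (p+1) = cosC * cosC ^ p := by ring
    rw [this]; exact mul_cos_mem_C ih

section Tensor

lemma cont3 (f₀ f₁ f₂ : C(ℝ, ℝ)) : Continuous fun x : V3 => f₀ (x 0) * f₁ (x 1) * f₂ (x 2) :=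
  ((f₀.continuous.comp (contCoord 0)).mul (f₁.continuous.comp (contCoord 1))).mul
    (f₂.continuous.comp (contCoord 2))

lemma tensor_vanish {v : V3 → ℝ} (hv : ContinuousOn v C3) (F0 F1 F2 : ℕ → C(ℝ, ℝ))
    (hgen : ∀ k₀ k₁ k₂ : ℕ, ∫ x in Q3, v x * (F0 k₀ (x 0) * F1 k₁ (x 1) * F2 k₂ (x 2)) = 0) :
    ∀ f₀ ∈ Submodule.span ℝ (Set.range F0), ∀ f₁ ∈ Submodule.span ℝ (Set.range F1),
    ∀ f₂ ∈ Submodule.span ℝ (Set.range F2),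
      ∫ x in Q3, v x * (f₀ (x 0) * f₁ (x 1) * f₂ (x 2)) = 0 := by
  have Jint : ∀ f₀ f₁ f₂ : C(ℝ,ℝ),
      IntegrableOn (fun x => v x * (f₀ (x 0) * f₁ (x 1) * f₂ (x 2))) Q3 volume :=
    fun f₀ f₁ f₂ => intQ3 hv (cont3 f₀ f₁ f₂).continuousOn
  have Jadd0 : ∀ a b f₁ f₂ : C(ℝ,ℝ), (∫ x in Q3, v x * ((a + b) (x 0) * f₁ (x 1) * f₂ (x 2)))
      = (∫ x in Q3, v x * (a (x 0) * f₁ (x 1) * f₂ (x 2)))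
        + ∫ x in Q3, v x * (b (x 0) * f₁ (x 1) * f₂ (x 2)) := by
    intro a b f₁ f₂
    rw [← integral_add (Jint a f₁ f₂) (Jint b f₁ f₂)]
    congr 1 with x
    simp only [ContinuousMap.add_apply]
    ring
  have Jadd1 : ∀ f₀ a b f₂ : C(ℝ,ℝ), (∫ x in Q3, v x * (f₀ (x 0) * (a + b) (x 1) * f₂ (x 2)))
      = (∫ x in Q3, v x * (f₀ (x 0) * a (x 1) * f₂ (x 2)))
        + ∫ x in Q3, v x * (f₀ (x 0) * b (x 1) * f₂ (x 2)) := by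
    intro f₀ a b f₂
    rw [← integral_add (Jint f₀ a f₂) (Jint f₀ b f₂)]
    congr 1 with x
    simp only [ContinuousMap.add_apply]
    ring
  have Jadd2 : ∀ f₀ f₁ a b : C(ℝ,ℝ), (∫ x in Q3, v x * (f₀ (x 0) * f₁ (x 1) * (a + b) (x 2)))
      = (∫ x in Q3, v x * (f₀ (x 0) * f₁ (x 1) * a (x 2)))
        + ∫ x in Q3, v x * (f₀ (x 0) * f₁ (x 1) * b (x 2)) := by
    intro f₀ f₁ a b
    rw [← integral_add (Jint f₀ f₁ a) (Jint f₀ f₁ b)]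
    congr 1 with x
    simp only [ContinuousMap.add_apply]
    ring
  have Jsmul0 : ∀ (c : ℝ) (a f₁ f₂ : C(ℝ,ℝ)),
      (∫ x in Q3, v x * ((c • a) (x 0) * f₁ (x 1) * f₂ (x 2)))
      = c * ∫ x in Q3, v x * (a (x 0) * f₁ (x 1) * f₂ (x 2)) := by
    intro c a f₁ f₂
    rw [← integral_const_mul]
    congr 1 with x
    simp only [ContinuousMap.smul_apply, smul_eq_mul]
    ring
  have Jsmul1 : ∀ (c : ℝ) (f₀ a f₂ : C(ℝ,ℝ)),
      (∫ x in Q3, v x * (f₀ (x 0) * (c • a) (x 1) * f₂ (x 2)))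
      = c * ∫ x in Q3, v x * (f₀ (x 0) * a (x 1) * f₂ (x 2)) := by
    intro c f₀ a f₂
    rw [← integral_const_mul]
    congr 1 with x
    simp only [ContinuousMap.smul_apply, smul_eq_mul]
    ring
  have Jsmul2 : ∀ (c : ℝ) (f₀ f₁ a : C(ℝ,ℝ)),
      (∫ x in Q3, v x * (f₀ (x 0) * f₁ (x 1) * (c • a) (x 2)))
      = c * ∫ x in Q3, v x * (f₀ (x 0) * f₁ (x 1) * a (x 2)) := by
    intro c f₀ f₁ a
    rw [← integral_const_mul]
    congr 1 with x
    simp only [ContinuousMap.smul_apply, smul_eq_mul]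
    ring
  have Jzero0 : ∀ f₁ f₂ : C(ℝ,ℝ),
      (∫ x in Q3, v x * ((0:C(ℝ,ℝ)) (x 0) * f₁ (x 1) * f₂ (x 2))) = 0 := by
    intro f₁ f₂; simp
  have Jzero1 : ∀ f₀ f₂ : C(ℝ,ℝ),
      (∫ x in Q3, v x * (f₀ (x 0) * (0:C(ℝ,ℝ)) (x 1) * f₂ (x 2))) = 0 := by
    intro f₀ f₂; simp
  have Jzero2 : ∀ f₀ f₁ : C(ℝ,ℝ),
      (∫ x in Q3, v x * (f₀ (x 0) * f₁ (x 1) * (0:C(ℝ,ℝ)) (x 2))) = 0 := by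
    intro f₀ f₁; simp
  intro f₀ hf₀
  induction hf₀ using Submodule.span_induction with
  | mem z0 hz0 =>
    obtain ⟨k₀, rfl⟩ := hz0
    intro f₁ hf₁
    induction hf₁ using Submodule.span_induction with
    | mem z1 hz1 =>
      obtain ⟨k₁, rfl⟩ := hz1
      intro f₂ hf₂
      induction hf₂ using Submodule.span_induction with
      | mem z2 hz2 =>
        obtain ⟨k₂, rfl⟩ := hz2
        exact hgen k₀ k₁ k₂
      | zero => exact Jzero2 _ _
      | add a b _ _ ha hb => rw [Jadd2, ha, hb, add_zero]
      | smul c a _ ha => rw [Jsmul2, ha, mul_zero]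
    | zero => intro f₂ _; exact Jzero1 _ _
    | add a b _ _ ha hb =>
      intro f₂ hf₂
      rw [Jadd1, ha f₂ hf₂, hb f₂ hf₂, add_zero]
    | smul c a _ ha =>
      intro f₂ hf₂
      rw [Jsmul1, ha f₂ hf₂, mul_zero]
  | zero => intro f₁ _ f₂ _; exact Jzero0 _ _
  | add a b _ _ ha hb =>
    intro f₁ hf₁ f₂ hf₂
    rw [Jadd0, ha f₁ hf₁ f₂ hf₂, hb f₁ hf₁ f₂ hf₂, add_zero]
  | smul c a _ ha =>
    intro f₁ hf₁ f₂ hf₂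
    rw [Jsmul0, ha f₁ hf₁ f₂ hf₂, mul_zero]

end Tensor

/-- the coordinate cosine as a continuous map -/
def CC (i : Fin 3) : C(V3, ℝ) := ⟨fun x => Real.cos (x i), Real.continuous_cos.comp (contCoord i)⟩

lemma SWcube {g : V3 → ℝ} (hg : ContinuousOn g C3)
    (h0 : ∀ m n p : ℕ, ∫ x in Q3, g x *
      ((Real.cos (x 0))^m * (Real.cos (x 1))^n * (Real.cos (x 2))^p) = 0) :
    ∀ x ∈ Q3, g x = 0 := by
  -- Tietze extension of g
  obtain ⟨G, hG⟩ := ContinuousMap.exists_restrict_eq (Y := ℝ) isCompact_C3.isClosed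
    ⟨C3.restrict g, hg.restrict⟩
  have hGg : ∀ x ∈ C3, G x = g x := by
    intro x hx
    have := congrFun (congrArg DFunLike.coe hG) ⟨x, hx⟩
    exact this
  have hGc : ContinuousOn G C3 := G.continuous.continuousOn
  -- the functional
  set M : C(V3, ℝ) → ℝ := fun h => ∫ x in Q3, G x * h x with hM
  have Mint : ∀ h : C(V3, ℝ), IntegrableOn (fun x => G x * h x) Q3 volume := fun h =>
    intQ3 hGc h.continuous.continuousOn
  have Msub : ∀ h₁ h₂ : C(V3, ℝ), M (h₁ - h₂) = M h₁ - M h₂ := by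
    intro h₁ h₂
    simp only [hM]
    rw [← integral_sub (Mint h₁) (Mint h₂)]
    congr 1 with x
    simp [mul_sub]
  have Madd : ∀ h₁ h₂ : C(V3, ℝ), M (h₁ + h₂) = M h₁ + M h₂ := by
    intro h₁ h₂
    simp only [hM]
    rw [← integral_add (Mint h₁) (Mint h₂)]
    congr 1 with x
    simp [mul_add]
  have Msmul : ∀ (c : ℝ) (h : C(V3, ℝ)), M (c • h) = c * M h := by
    intro c h
    simp only [hM]
    simp only [ContinuousMap.smul_apply, smul_eq_mul]
    rw [← integral_const_mul]
    congr 1 with x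
    ring
  -- monomials vanish
  have Mmono : ∀ m n p : ℕ, M (CC 0 ^ m * CC 1 ^ n * CC 2 ^ p) = 0 := by
    intro m n p
    rw [hM, ← h0 m n p]
    apply setIntegral_congr_fun isOpen_Q3.measurableSet
    intro x hx
    simp [CC, hGg x (Q3_subset_C3 hx)]
  -- adjoin vanishes
  have Madj : ∀ h ∈ Algebra.adjoin ℝ {CC 0, CC 1, CC 2}, M h = 0 := by
    intro h hh
    have hh' : h ∈ Submodule.span ℝ (Submonoid.closure ({CC 0, CC 1, CC 2} : Set C(V3, ℝ))) := by
      rw [← Algebra.adjoin_eq_span]; exact hh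
    clear hh
    induction hh' using Submodule.span_induction with
    | mem z hz =>
      obtain ⟨m, n, p, rfl⟩ : ∃ m n p : ℕ, z = CC 0 ^ m * CC 1 ^ n * CC 2 ^ p := by
        induction hz using Submonoid.closure_induction with
        | mem w hw =>
          simp only [Set.mem_insert_iff, Set.mem_singleton_iff] at hw
          rcases hw with h1 | h2 | h3
          · exact ⟨1, 0, 0, by simp [h1]⟩
          · exact ⟨0, 1, 0, by simp [h2]⟩
          · exact ⟨0, 0, 1, by simp [h3]⟩
        | one => exact ⟨0, 0, 0, by simp⟩
        | mul a b _ _ ha hb =>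
          obtain ⟨m, n, p, rfl⟩ := ha
          obtain ⟨m', n', p', rfl⟩ := hb
          exact ⟨m + m', n + n', p + p', by ring⟩
      exact Mmono _ _ _
    | zero => simp only [hM]; simp
    | add a b _ _ ha hb => rw [Madd a b, ha, hb, add_zero]
    | smul c a _ ha => rw [Msmul c a, ha, mul_zero]
  -- Stone-Weierstrass density
  haveI : CompactSpace C3 := isCompact_iff_compactSpace.mp isCompact_C3
  set ι : C(C3, V3) := ⟨Subtype.val, continuous_subtype_val⟩ with hι
  set ρ : C(V3, ℝ) →ₐ[ℝ] C(C3, ℝ) := ContinuousMap.compRightAlgHom ℝ ℝ ι with hρ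
  have hρ_apply : ∀ (f : C(V3, ℝ)) (z : C3), (ρ f) z = f z.1 := fun f z => rfl
  set B : Subalgebra ℝ C(C3, ℝ) := (Algebra.adjoin ℝ {CC 0, CC 1, CC 2}).map ρ with hB
  have hsep : B.SeparatesPoints := by
    intro x y hxy
    have : ∃ i : Fin 3, x.1 i ≠ y.1 i := by
      by_contra hc
      push_neg at hc
      exact hxy (Subtype.ext ((WithLp.ext_iff 2).2 (funext hc)))
    obtain ⟨i, hi⟩ := this
    refine ⟨ρ (CC i), ⟨ρ (CC i), Subalgebra.mem_map.2
      ⟨CC i, Algebra.subset_adjoin (by fin_cases i <;> simp), rfl⟩, rfl⟩, ?_⟩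
    simp only [hρ_apply, CC, ContinuousMap.coe_mk]
    intro hcc
    exact hi (Real.injOn_cos (x.2 i) (y.2 i) hcc)
  have hdense := ContinuousMap.subalgebra_topologicalClosure_eq_top_of_separatesPoints B hsep
  have hGmem : (ρ G) ∈ closure (B : Set C(C3, ℝ)) := by
    rw [← Subalgebra.topologicalClosure_coe, hdense]
    trivial
  -- the key vanishing
  have hKint : IntegrableOn (fun x => |G x|) Q3 volume := by
    have := (intQ3 hGc hGc).abs
    exact (intQ3 hGc (continuousOn_const (c := (1:ℝ)))).abs.congr (by
      filter_upwards with x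
      simp)
  set K : ℝ := ∫ x in Q3, |G x| with hK
  have hK0 : 0 ≤ K := setIntegral_nonneg isOpen_Q3.measurableSet (fun x _ => abs_nonneg _)
  have hMG : M G = 0 := by
    by_contra hne
    have hpos : 0 < |M G| := abs_pos.mpr hne
    set ε : ℝ := |M G| / (K + 1) with hε
    have hε0 : 0 < ε := div_pos hpos (by linarith)
    obtain ⟨b, hbB, hbd⟩ := Metric.mem_closure_iff.1 hGmem ε hε0
    obtain ⟨h', hh', rfl⟩ := Subalgebra.mem_map.1 hbB
    have hMh' : M h' = 0 := Madj h' hh'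
    have hMsplit : M G = M (G - h') := by rw [Msub, hMh', sub_zero]
    have hbound : ∀ x ∈ Q3, |G x * (G - h') x| ≤ |G x| * ε := by
      intro x hx
      rw [abs_mul]
      apply mul_le_mul_of_nonneg_left _ (abs_nonneg _)
      have h1 : (G - h') x = (ρ G - ρ h') ⟨x, Q3_subset_C3 hx⟩ := by
        simp [hρ_apply]
      rw [h1]
      calc |(ρ G - ρ h') ⟨x, Q3_subset_C3 hx⟩| ≤ ‖ρ G - ρ h'‖ := by
            rw [← Real.norm_eq_abs]
            exact ContinuousMap.norm_coe_le_norm _ _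
        _ ≤ ε := by
            rw [← dist_eq_norm] at *
            exact le_of_lt hbd
    have hint1 : IntegrableOn (fun x => G x * (G - h') x) Q3 volume := Mint (G - h')
    have habs : |M (G - h')| ≤ K * ε := by
      rw [hM]
      calc |∫ x in Q3, G x * (G - h') x| ≤ ∫ x in Q3, |G x * (G - h') x| := by
            rw [← Real.norm_eq_abs]
            exact (norm_integral_le_integral_norm _).trans_eq rfl
        _ ≤ ∫ x in Q3, |G x| * ε := by
            apply setIntegral_mono_on hint1.abs (hKint.mul_const ε) isOpen_Q3.measurableSet
            exact hbound
        _ = K * ε := by rw [integral_mul_const]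
    rw [← hMsplit] at habs
    have hlt : K * ε < |M G| := by
      have h1 : K / (K + 1) < 1 := by
        rw [div_lt_one (by linarith)]
        linarith
      calc K * ε = (K / (K + 1)) * |M G| := by rw [hε]; ring
        _ < 1 * |M G| := mul_lt_mul_of_pos_right h1 hpos
        _ = |M G| := one_mul _
    linarith
  -- conclude g = 0 on Q3
  have hsq : (fun x => G x * G x) =ᵐ[volume.restrict Q3] 0 := by
    rw [← integral_eq_zero_iff_of_nonneg]
    · exact hMG
    · intro x; exact mul_self_nonneg _
    · exact Mint G
  have hmeas0 : volume (Q3 ∩ {x | G x ≠ 0}) = 0 := by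
    have := ae_restrict_iff' (μ := volume) (s := Q3) isOpen_Q3.measurableSet |>.1 hsq
    rw [Filter.eventually_iff, mem_ae_iff] at this
    have hsub : Q3 ∩ {x | G x ≠ 0} ⊆ {x | x ∈ Q3 → (fun x => G x * G x) x = (0 : V3 → ℝ) x}ᶜ := by
      intro x hx
      simp only [Set.mem_compl_iff, Set.mem_setOf_eq, not_forall]
      refine ⟨hx.1, ?_⟩
      simp only [Pi.zero_apply]
      exact fun hc => hx.2 (by nlinarith [mul_self_nonneg (G x)] : G x = 0)
    exact measure_mono_null hsub this
  have hopen : IsOpen (Q3 ∩ {x | G x ≠ 0}) :=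
    isOpen_Q3.inter (isOpen_ne_fun G.continuous continuous_const)
  have hempty : Q3 ∩ {x | G x ≠ 0} = ∅ := (hopen.measure_eq_zero_iff volume).1 hmeas0
  intro x hx
  have : G x = 0 := by
    by_contra hc
    exact absurd (Set.mem_inter hx hc) (by rw [hempty]; exact fun h => h)
  rw [← hGg x (Q3_subset_C3 hx)]
  exact this

lemma sin_coord_cont (i : Fin 3) : Continuous fun x : V3 => Real.sin (x i) :=
  Real.continuous_sin.comp (contCoord i)

lemma vanish_pattern0 {v : V3 → ℝ} (hv : ContinuousOn v C3)
    (h0 : ∀ k₀ k₁ k₂ : ℕ, ∫ x in Q3,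
      v x * (Real.cos (k₀ * x 0) * Real.sin (k₁ * x 1) * Real.sin (k₂ * x 2)) = 0) :
    ∀ x ∈ Q3, v x = 0 := by
  have key := tensor_vanish hv Cf Sf Sf (by
    intro k₀ k₁ k₂
    simpa [Cf, Sf] using h0 k₀ k₁ k₂)
  set g : V3 → ℝ := fun x => v x * (Real.sin (x 1) * Real.sin (x 2)) with hgdef
  have hg : ContinuousOn g C3 :=
    hv.mul ((sin_coord_cont 1).mul (sin_coord_cont 2)).continuousOn
  have hsw : ∀ x ∈ Q3, g x = 0 := by
    apply SWcube hg
    intro m n p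
    have := key (cosC ^ m) (cos_pow_mem m) (sinC * cosC ^ n) (sin_cos_pow_mem n)
      (sinC * cosC ^ p) (sin_cos_pow_mem p)
    rw [← this]
    congr 1 with x
    simp only [hgdef, ContinuousMap.pow_apply, ContinuousMap.mul_apply,
      cosC, sinC, ContinuousMap.coe_mk]
    ring
  intro x hx
  have hgx := hsw x hx
  rw [hgdef] at hgx
  have h1 : Real.sin (x 1) ≠ 0 := ne_of_gt (Real.sin_pos_of_pos_of_lt_pi (hx 1).1 (hx 1).2)
  have h2 : Real.sin (x 2) ≠ 0 := ne_of_gt (Real.sin_pos_of_pos_of_lt_pi (hx 2).1 (hx 2).2)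
  simp only at hgx
  rcases mul_eq_zero.1 hgx with h | h
  · exact h
  · rcases mul_eq_zero.1 h with h' | h'
    · exact absurd h' h1
    · exact absurd h' h2

lemma vanish_pattern1 {v : V3 → ℝ} (hv : ContinuousOn v C3)
    (h0 : ∀ k₀ k₁ k₂ : ℕ, ∫ x in Q3,
      v x * (Real.sin (k₀ * x 0) * Real.cos (k₁ * x 1) * Real.sin (k₂ * x 2)) = 0) :
    ∀ x ∈ Q3, v x = 0 := by
  have key := tensor_vanish hv Sf Cf Sf (by
    intro k₀ k₁ k₂
    simpa [Cf, Sf] using h0 k₀ k₁ k₂)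
  set g : V3 → ℝ := fun x => v x * (Real.sin (x 0) * Real.sin (x 2)) with hgdef
  have hg : ContinuousOn g C3 :=
    hv.mul ((sin_coord_cont 0).mul (sin_coord_cont 2)).continuousOn
  have hsw : ∀ x ∈ Q3, g x = 0 := by
    apply SWcube hg
    intro m n p
    have := key (sinC * cosC ^ m) (sin_cos_pow_mem m) (cosC ^ n) (cos_pow_mem n)
      (sinC * cosC ^ p) (sin_cos_pow_mem p)
    rw [← this]
    congr 1 with x
    simp only [hgdef, ContinuousMap.pow_apply, ContinuousMap.mul_apply,
      cosC, sinC, ContinuousMap.coe_mk]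
    ring
  intro x hx
  have hgx := hsw x hx
  rw [hgdef] at hgx
  have h1 : Real.sin (x 0) ≠ 0 := ne_of_gt (Real.sin_pos_of_pos_of_lt_pi (hx 0).1 (hx 0).2)
  have h2 : Real.sin (x 2) ≠ 0 := ne_of_gt (Real.sin_pos_of_pos_of_lt_pi (hx 2).1 (hx 2).2)
  simp only at hgx
  rcases mul_eq_zero.1 hgx with h | h
  · exact h
  · rcases mul_eq_zero.1 h with h' | h'
    · exact absurd h' h1
    · exact absurd h' h2

lemma vanish_pattern2 {v : V3 → ℝ} (hv : ContinuousOn v C3)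
    (h0 : ∀ k₀ k₁ k₂ : ℕ, ∫ x in Q3,
      v x * (Real.sin (k₀ * x 0) * Real.sin (k₁ * x 1) * Real.cos (k₂ * x 2)) = 0) :
    ∀ x ∈ Q3, v x = 0 := by
  have key := tensor_vanish hv Sf Sf Cf (by
    intro k₀ k₁ k₂
    simpa [Cf, Sf] using h0 k₀ k₁ k₂)
  set g : V3 → ℝ := fun x => v x * (Real.sin (x 0) * Real.sin (x 1)) with hgdef
  have hg : ContinuousOn g C3 :=
    hv.mul ((sin_coord_cont 0).mul (sin_coord_cont 1)).continuousOn
  have hsw : ∀ x ∈ Q3, g x = 0 := by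
    apply SWcube hg
    intro m n p
    have := key (sinC * cosC ^ m) (sin_cos_pow_mem m) (sinC * cosC ^ n) (sin_cos_pow_mem n)
      (cosC ^ p) (cos_pow_mem p)
    rw [← this]
    congr 1 with x
    simp only [hgdef, ContinuousMap.pow_apply, ContinuousMap.mul_apply,
      cosC, sinC, ContinuousMap.coe_mk]
    ring
  intro x hx
  have hgx := hsw x hx
  rw [hgdef] at hgx
  have h1 : Real.sin (x 0) ≠ 0 := ne_of_gt (Real.sin_pos_of_pos_of_lt_pi (hx 0).1 (hx 0).2)
  have h2 : Real.sin (x 1) ≠ 0 := ne_of_gt (Real.sin_pos_of_pos_of_lt_pi (hx 1).1 (hx 1).2)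
  simp only at hgx
  rcases mul_eq_zero.1 hgx with h | h
  · exact h
  · rcases mul_eq_zero.1 h with h' | h'
    · exact absurd h' h1
    · exact absurd h' h2

section Div
variable (u : V3 → Fin 3 → ℝ)

/-- the equivalence -/
def eL : V3 ≃L[ℝ] (Fin 3 → ℝ) := PiLp.continuousLinearEquiv 2 ℝ (fun _ : Fin 3 => ℝ)

lemma eL_apply (x : V3) (i : Fin 3) : eL x i = x i := rfl
lemma eL_symm_apply (y : Fin 3 → ℝ) (i : Fin 3) : (eL.symm y) i = y i := rfl

lemma div_ortho (hucont : ContinuousOn u C3) (huC1 : ContDiffOn ℝ 1 u Q3)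
    (hudiv : ∀ x ∈ Q3, div3 u x = 0) (k₀ k₁ k₂ : ℕ) :
    ∫ x in Q3, ((k₀:ℝ) * (u x 0 * (Real.cos (k₀ * x 0) * Real.sin (k₁ * x 1) * Real.sin (k₂ * x 2)))
      + (k₁:ℝ) * (u x 1 * (Real.sin (k₀ * x 0) * Real.cos (k₁ * x 1) * Real.sin (k₂ * x 2)))
      + (k₂:ℝ) * (u x 2 * (Real.sin (k₀ * x 0) * Real.sin (k₁ * x 1) * Real.cos (k₂ * x 2)))) = 0 := by
  classical
  set bb : Fin 3 → ℝ := fun _ => π with hbb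
  set φ : (Fin 3 → ℝ) → ℝ :=
    fun y => Real.sin (k₀ * y 0) * Real.sin (k₁ * y 1) * Real.sin (k₂ * y 2) with hφdef
  set P : Fin 3 → (Fin 3 → ℝ) →L[ℝ] ℝ := fun i => ContinuousLinearMap.proj i with hP
  set Dφ : (Fin 3 → ℝ) → (Fin 3 → ℝ) →L[ℝ] ℝ := fun y =>
    ((k₀:ℝ) * Real.cos (k₀ * y 0) * Real.sin (k₁ * y 1) * Real.sin (k₂ * y 2)) • P 0
    + (Real.sin (k₀ * y 0) * ((k₁:ℝ) * Real.cos (k₁ * y 1)) * Real.sin (k₂ * y 2)) • P 1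
    + (Real.sin (k₀ * y 0) * Real.sin (k₁ * y 1) * ((k₂:ℝ) * Real.cos (k₂ * y 2))) • P 2
    with hDφ
  -- derivative of φ
  have hsin : ∀ (k : ℕ) (i : Fin 3) (y : Fin 3 → ℝ),
      HasFDerivAt (fun y : Fin 3 → ℝ => Real.sin (k * y i))
        ((Real.cos ((k:ℝ) * y i) * (k:ℝ)) • P i) y := by
    intro k i y
    have h0 : HasDerivAt (fun t : ℝ => (k:ℝ) * t) (k:ℝ) (y i) := by
      simpa using (hasDerivAt_id (y i)).const_mul (k:ℝ)
    have h1 : HasDerivAt (fun t : ℝ => Real.sin ((k:ℝ) * t))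
        (Real.cos ((k:ℝ) * y i) * (k:ℝ)) (y i) := by
      exact (Real.hasDerivAt_sin ((k:ℝ) * y i)).comp (y i) h0
    have h2 : HasFDerivAt (fun y : Fin 3 → ℝ => y i) (P i) y :=
      (ContinuousLinearMap.proj i (R := ℝ) (φ := fun _ : Fin 3 => ℝ)).hasFDerivAt
    exact h1.comp_hasFDerivAt y h2
  have hφderiv : ∀ y, HasFDerivAt φ (Dφ y) y := by
    intro y
    have h01 := (hsin k₀ 0 y).mul (hsin k₁ 1 y)
    have h012 := h01.mul (hsin k₂ 2 y)
    refine h012.congr_fderiv ?_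
    rw [hDφ]
    ext z
    simp only [ContinuousLinearMap.add_apply, ContinuousLinearMap.smul_apply, smul_eq_mul,
      Pi.mul_apply]
    ring
  -- the vector field and its derivative
  set B : Fin 3 → (Fin 3 → ℝ) → ℝ := fun i y => u (eL.symm y) i with hB
  set DB : Fin 3 → (Fin 3 → ℝ) → (Fin 3 → ℝ) →L[ℝ] ℝ := fun i y =>
    (fderiv ℝ (fun x : V3 => u x i) (eL.symm y)).comp
      (eL.symm : (Fin 3 → ℝ) →L[ℝ] V3) with hDB
  set f : Fin 3 → (Fin 3 → ℝ) → ℝ := fun i y => φ y * B i y with hf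
  set f' : Fin 3 → (Fin 3 → ℝ) → (Fin 3 → ℝ) →L[ℝ] ℝ :=
    fun i y => φ y • DB i y + B i y • Dφ y with hf'
  have hmemQ : ∀ y : Fin 3 → ℝ, (y ∈ Set.pi univ fun _ => Ioo (0:ℝ) π) → eL.symm y ∈ Q3 := by
    intro y hy i
    exact hy i (mem_univ i)
  have hmemC : ∀ y : Fin 3 → ℝ, y ∈ Icc (0 : Fin 3 → ℝ) bb → eL.symm y ∈ C3 := by
    intro y hy i
    exact ⟨hy.1 i, hy.2 i⟩
  have hudiff : ∀ x ∈ Q3, DifferentiableAt ℝ u x := fun x hx =>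
    (huC1.differentiableOn one_ne_zero).differentiableAt (isOpen_Q3.mem_nhds hx)
  have hBdiff : ∀ (i : Fin 3) (y : Fin 3 → ℝ), eL.symm y ∈ Q3 →
      HasFDerivAt (B i) (DB i y) y := by
    intro i y hy
    have h1 : HasFDerivAt (fun x : V3 => u x i)
        (fderiv ℝ (fun x : V3 => u x i) (eL.symm y)) (eL.symm y) :=
      ((differentiableAt_pi.mp (hudiff _ hy)) i).hasFDerivAt
    have h2 : HasFDerivAt (eL.symm : (Fin 3 → ℝ) → V3)
        (eL.symm : (Fin 3 → ℝ) →L[ℝ] V3) y := eL.symm.hasFDerivAt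
    exact h1.comp y h2
  have hfderiv : ∀ y ∈ (Set.pi univ fun _ => Ioo (0:ℝ) π), ∀ i : Fin 3,
      HasFDerivAt (f i) (f' i y) y := by
    intro y hy i
    exact (hφderiv y).mul (hBdiff i y (hmemQ y hy))
  -- continuity
  have hBcont : ∀ i : Fin 3, ContinuousOn (B i) (Icc (0 : Fin 3 → ℝ) bb) := by
    intro i
    have h1 : ContinuousOn (fun y : Fin 3 → ℝ => u (eL.symm y)) (Icc 0 bb) :=
      hucont.comp eL.symm.continuous.continuousOn hmemC
    exact (continuous_apply i).comp_continuousOn h1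
  have htrigS : ∀ (k : ℕ) (i : Fin 3), Continuous fun y : Fin 3 → ℝ => Real.sin (k * y i) :=
    fun k i => Real.continuous_sin.comp (continuous_const.mul (continuous_apply i))
  have htrigC : ∀ (k : ℕ) (i : Fin 3), Continuous fun y : Fin 3 → ℝ => Real.cos (k * y i) :=
    fun k i => Real.continuous_cos.comp (continuous_const.mul (continuous_apply i))
  have hφcont : Continuous φ := ((htrigS k₀ 0).mul (htrigS k₁ 1)).mul (htrigS k₂ 2)
  have Hc : ∀ i : Fin 3, ContinuousOn (f i) (Icc (0 : Fin 3 → ℝ) bb) :=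
    fun i => hφcont.continuousOn.mul (hBcont i)
  -- the target integrand in the box
  set Ψ : (Fin 3 → ℝ) → ℝ := fun y =>
      (k₀:ℝ) * (B 0 y * (Real.cos (k₀ * y 0) * Real.sin (k₁ * y 1) * Real.sin (k₂ * y 2)))
      + (k₁:ℝ) * (B 1 y * (Real.sin (k₀ * y 0) * Real.cos (k₁ * y 1) * Real.sin (k₂ * y 2)))
      + (k₂:ℝ) * (B 2 y * (Real.sin (k₀ * y 0) * Real.sin (k₁ * y 1) * Real.cos (k₂ * y 2)))
    with hΨ
  have hDBsingle : ∀ (i : Fin 3) (y : Fin 3 → ℝ),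
      DB i y (Pi.single i 1) = pd3 i (fun x => u x i) (eL.symm y) := by
    intro i y
    rfl
  have hsum : ∀ y : Fin 3 → ℝ, eL.symm y ∈ Q3 →
      (∑ i, f' i y (Pi.single i 1)) = Ψ y := by
    intro y hy
    have hdiv := hudiv _ hy
    rw [div3] at hdiv
    rw [Fin.sum_univ_three]
    simp only [hf', ContinuousLinearMap.add_apply, ContinuousLinearMap.smul_apply, smul_eq_mul]
    rw [hDBsingle 0 y, hDBsingle 1 y, hDBsingle 2 y]
    have e0 : Dφ y (Pi.single (0 : Fin 3) 1)
        = (k₀:ℝ) * Real.cos (k₀ * y 0) * Real.sin (k₁ * y 1) * Real.sin (k₂ * y 2) := by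
      simp [hDφ, hP, Pi.single_apply]
    have e1 : Dφ y (Pi.single (1 : Fin 3) 1)
        = Real.sin (k₀ * y 0) * ((k₁:ℝ) * Real.cos (k₁ * y 1)) * Real.sin (k₂ * y 2) := by
      simp [hDφ, hP, Pi.single_apply]
    have e2 : Dφ y (Pi.single (2 : Fin 3) 1)
        = Real.sin (k₀ * y 0) * Real.sin (k₁ * y 1) * ((k₂:ℝ) * Real.cos (k₂ * y 2)) := by
      simp [hDφ, hP, Pi.single_apply]
    rw [e0, e1, e2, hΨ, hφdef]
    simp only [hB]
    linear_combination (Real.sin (k₀ * y 0) * Real.sin (k₁ * y 1) * Real.sin (k₂ * y 2)) * hdiv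
  -- integrability of the divergence
  have hΨcont : ContinuousOn Ψ (Icc (0 : Fin 3 → ℝ) bb) := by
    apply ContinuousOn.add
    apply ContinuousOn.add
    · exact continuousOn_const.mul ((hBcont 0).mul
        (((htrigC k₀ 0).mul (htrigS k₁ 1)).mul (htrigS k₂ 2)).continuousOn)
    · exact continuousOn_const.mul ((hBcont 1).mul
        (((htrigS k₀ 0).mul (htrigC k₁ 1)).mul (htrigS k₂ 2)).continuousOn)
    · exact continuousOn_const.mul ((hBcont 2).mul
        (((htrigS k₀ 0).mul (htrigS k₁ 1)).mul (htrigC k₂ 2)).continuousOn)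
  have hnull : volume ((Icc (0 : Fin 3 → ℝ) bb) \ (Set.pi univ fun _ => Ioo (0:ℝ) π)) = 0 := by
    have h := MeasureTheory.Measure.univ_pi_Ioo_ae_eq_Icc
      (μ := fun _ : Fin 3 => (volume : Measure ℝ)) (f := fun _ => (0:ℝ)) (g := fun _ => π)
    have h2 := (MeasureTheory.ae_eq_set.mp h).2
    exact h2
  have hae : (fun y => ∑ i, f' i y (Pi.single i 1))
      =ᵐ[volume.restrict (Icc (0 : Fin 3 → ℝ) bb)] Ψ := by
    have hsub : {y : Fin 3 → ℝ | ¬ (∑ i, f' i y (Pi.single i 1)) = Ψ y}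
        ∩ Icc (0 : Fin 3 → ℝ) bb
        ⊆ (Icc (0 : Fin 3 → ℝ) bb) \ (Set.pi univ fun _ => Ioo (0:ℝ) π) := by
      intro y hy
      refine ⟨hy.2, fun hmem => hy.1 (hsum y (hmemQ y hmem))⟩
    rw [Filter.EventuallyEq, ae_restrict_iff' measurableSet_Icc]
    rw [Filter.Eventually, mem_ae_iff]
    apply measure_mono_null _ hnull
    intro y hy
    simp only [Set.mem_compl_iff, Set.mem_setOf_eq, not_forall] at hy
    obtain ⟨hyIcc, hyne⟩ := hy
    exact hsub ⟨hyne, hyIcc⟩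
  have Hi : IntegrableOn (fun y => ∑ i, f' i y (Pi.single i 1)) (Icc (0 : Fin 3 → ℝ) bb) :=
    (hΨcont.integrableOn_compact isCompact_Icc).congr hae.symm
  -- apply the divergence theorem
  have hle : (0 : Fin 3 → ℝ) ≤ bb := fun i => Real.pi_pos.le
  have hdivthm := MeasureTheory.integral_divergence_of_hasFDerivAt_off_countable'
    (0 : Fin 3 → ℝ) bb hle f f' ∅ Set.countable_empty Hc
    (fun y hy i => hfderiv y (by simpa using hy.1) i) Hi
  -- faces vanish
  have hface : ∀ (i : Fin 3) (c : ℝ), Real.sin ((![k₀,k₁,k₂] i : ℕ) * c) = 0 →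
      ∀ z : Fin 2 → ℝ, f i (i.insertNth c z) = 0 := by
    intro i c hc z
    rw [hf]
    simp only
    rw [hφdef]
    fin_cases i <;> simp at hc <;> simp [Fin.insertNth_apply_same, hc]
  have hfaces : ∀ (i : Fin 3) (c : ℝ), Real.sin ((![k₀,k₁,k₂] i : ℕ) * c) = 0 →
      (∫ z in Icc ((0 : Fin 3 → ℝ) ∘ i.succAbove) (bb ∘ i.succAbove),
        f i (i.insertNth c z)) = 0 := by
    intro i c hc
    rw [setIntegral_congr_fun measurableSet_Icc (fun z _ => hface i c hc z)]
    simp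
  have hsin0 : ∀ i : Fin 3, Real.sin ((![k₀,k₁,k₂] i : ℕ) * (0:ℝ)) = 0 := by
    intro i; simp
  have hsinπ : ∀ i : Fin 3, Real.sin ((![k₀,k₁,k₂] i : ℕ) * π) = 0 := by
    intro i; exact Real.sin_nat_mul_pi _
  have hrhs : (∑ i : Fin 3,
      ((∫ z in Icc ((0 : Fin 3 → ℝ) ∘ i.succAbove) (bb ∘ i.succAbove),
          f i (i.insertNth (bb i) z)) -
        ∫ z in Icc ((0 : Fin 3 → ℝ) ∘ i.succAbove) (bb ∘ i.succAbove),
          f i (i.insertNth ((0 : Fin 3 → ℝ) i) z))) = 0 := by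
    apply Finset.sum_eq_zero
    intro i _
    rw [show bb i = π from rfl, show (0 : Fin 3 → ℝ) i = (0:ℝ) from rfl,
      hfaces i π (hsinπ i), hfaces i (0:ℝ) (hsin0 i), sub_zero]
  rw [hrhs] at hdivthm
  have hbox : ∫ y in Icc (0 : Fin 3 → ℝ) bb, Ψ y = 0 := by
    rw [← integral_congr_ae hae]
    exact hdivthm
  -- transfer back to V3
  have hvolpres := EuclideanSpace.volume_preserving_symm_measurableEquiv_toLp (Fin 3)
  have hemb : MeasurableEmbedding (MeasurableEquiv.symm (MeasurableEquiv.toLp 2 (Fin 3 → ℝ))) :=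
    (MeasurableEquiv.symm (MeasurableEquiv.toLp 2 (Fin 3 → ℝ))).measurableEmbedding
  have hpre : (MeasurableEquiv.symm (MeasurableEquiv.toLp 2 (Fin 3 → ℝ))) ⁻¹' (Icc (0 : Fin 3 → ℝ) bb) = C3 := by
    ext x
    constructor
    · intro hx i
      exact ⟨hx.1 i, hx.2 i⟩
    · intro hx
      exact ⟨fun i => (hx i).1, fun i => (hx i).2⟩
  have htrans : ∫ x in C3, Ψ (MeasurableEquiv.symm (MeasurableEquiv.toLp 2 (Fin 3 → ℝ)) x) = 0 := by
    rw [← hpre] at *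
    rw [hvolpres.setIntegral_preimage_emb hemb Ψ _]
    exact hbox
  have hΨback : ∀ x : V3, Ψ (MeasurableEquiv.symm (MeasurableEquiv.toLp 2 (Fin 3 → ℝ)) x)
      = ((k₀:ℝ) * (u x 0 * (Real.cos (k₀ * x 0) * Real.sin (k₁ * x 1) * Real.sin (k₂ * x 2)))
      + (k₁:ℝ) * (u x 1 * (Real.sin (k₀ * x 0) * Real.cos (k₁ * x 1) * Real.sin (k₂ * x 2)))
      + (k₂:ℝ) * (u x 2 * (Real.sin (k₀ * x 0) * Real.sin (k₁ * x 1) * Real.cos (k₂ * x 2)))) :=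
    fun x => rfl
  have hC3 : ∫ x in C3,
      ((k₀:ℝ) * (u x 0 * (Real.cos (k₀ * x 0) * Real.sin (k₁ * x 1) * Real.sin (k₂ * x 2)))
      + (k₁:ℝ) * (u x 1 * (Real.sin (k₀ * x 0) * Real.cos (k₁ * x 1) * Real.sin (k₂ * x 2)))
      + (k₂:ℝ) * (u x 2 * (Real.sin (k₀ * x 0) * Real.sin (k₁ * x 1) * Real.cos (k₂ * x 2)))) = 0 := by
    exact htrans
  have hC3Q3 : volume (C3 \ Q3) = 0 := by
    have hsub : C3 \ Q3 ⊆ (MeasurableEquiv.symm (MeasurableEquiv.toLp 2 (Fin 3 → ℝ))) ⁻¹'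
        ((Icc (0 : Fin 3 → ℝ) bb) \ (Set.pi univ fun _ => Ioo (0:ℝ) π)) := by
      rintro x ⟨hC, hQ⟩
      refine ⟨⟨fun i => (hC i).1, fun i => (hC i).2⟩, fun hmem => hQ ?_⟩
      intro i
      exact hmem i (mem_univ i)
    apply measure_mono_null hsub
    rw [hvolpres.measure_preimage
      (measurableSet_Icc.diff (MeasurableSet.univ_pi fun _ => measurableSet_Ioo)).nullMeasurableSet]
    exact hnull
  have hQC : Q3 =ᵐ[volume] C3 := by
    rw [MeasureTheory.ae_eq_set]
    constructor
    · rw [Set.diff_eq_empty.mpr Q3_subset_C3]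
      simp
    · exact hC3Q3
  rw [setIntegral_congr_set hQC]
  exact hC3

end Div

lemma trig_cont (f g h : ℝ → ℝ) (hf : Continuous f) (hg : Continuous g) (hh : Continuous h)
    (a b c : ℕ) : Continuous fun x : V3 => f (a * x 0) * g (b * x 1) * h (c * x 2) :=
  ((hf.comp (continuous_const.mul (contCoord 0))).mul
    (hg.comp (continuous_const.mul (contCoord 1)))).mul
    (hh.comp (continuous_const.mul (contCoord 2)))

lemma int_lin2 {F G : V3 → ℝ} (hF : IntegrableOn F Q3 volume) (hG : IntegrableOn G Q3 volume)
    (c₁ c₂ : ℝ) :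
    ∫ x in Q3, (c₁ * F x + c₂ * G x) = c₁ * (∫ x in Q3, F x) + c₂ * ∫ x in Q3, G x := by
  rw [integral_add (hF.const_mul c₁) (hG.const_mul c₂), integral_const_mul, integral_const_mul]

lemma int_lin3 {F G H : V3 → ℝ} (hF : IntegrableOn F Q3 volume) (hG : IntegrableOn G Q3 volume)
    (hH : IntegrableOn H Q3 volume) (c₁ c₂ c₃ : ℝ) :
    ∫ x in Q3, (c₁ * F x + c₂ * G x + c₃ * H x)
      = c₁ * (∫ x in Q3, F x) + c₂ * (∫ x in Q3, G x) + c₃ * ∫ x in Q3, H x := by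
  have e1 : ∫ x in Q3, (c₁ * F x + c₂ * G x + c₃ * H x)
      = (∫ x in Q3, (c₁ * F x + c₂ * G x)) + ∫ x in Q3, c₃ * H x :=
    integral_add (f := fun x => c₁ * F x + c₂ * G x) (g := fun x => c₃ * H x)
      ((hF.const_mul c₁).add (hG.const_mul c₂)) (hH.const_mul c₃)
  rw [e1, int_lin2 hF hG, integral_const_mul]

/-- completeness in the cube: a divergence-free vector field on the cube
`(0,π)³`, continuous up to the boundary, `C¹` inside, satisfying the perfectly
conducting boundary conditions, and `L²`-orthogonal to all TE and TM fields, vanishes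
identically. -/
theorem cube_completeness (u : V3 → Fin 3 → ℝ)
    (hucont : ContinuousOn u {x : V3 | ∀ i, x i ∈ Set.Icc 0 π})
    (huC1 : ContDiffOn ℝ 1 u {x : V3 | ∀ i, x i ∈ Set.Ioo 0 π})
    (hudiv : ∀ x : V3, (∀ i, x i ∈ Set.Ioo 0 π) → div3 u x = 0)
    (hubc : ∀ x : V3, (∀ i, x i ∈ Set.Icc 0 π) → ∀ i : Fin 3, (x i = 0 ∨ x i = π) →
      ∀ j, j ≠ i → u x j = 0)
    (hTE : ∀ k₁ k₂ k₃ : ℕ, ¬(k₁ = 0 ∧ k₂ = 0) → 1 ≤ k₃ →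
      ∫ x in {x : V3 | ∀ i, x i ∈ Set.Ioo 0 π},
        (∑ i, u x i * ETEcube k₁ k₂ k₃ x i) = 0)
    (hTM : ∀ k₁ k₂ k₃ : ℕ, 1 ≤ k₁ → 1 ≤ k₂ →
      ∫ x in {x : V3 | ∀ i, x i ∈ Set.Ioo 0 π},
        (∑ i, u x i * ETMcube k₁ k₂ k₃ x i) = 0) :
    ∀ x : V3, (∀ i, x i ∈ Set.Ioo 0 π) → u x = 0 := by
  have hC3 : ContinuousOn u C3 := hucont
  have huC1' : ContDiffOn ℝ 1 u Q3 := huC1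
  have hudiv' : ∀ x ∈ Q3, div3 u x = 0 := hudiv
  have hu0 : ContinuousOn (fun x => u x 0) C3 := (continuous_apply 0).comp_continuousOn hC3
  have hu1 : ContinuousOn (fun x => u x 1) C3 := (continuous_apply 1).comp_continuousOn hC3
  have hu2 : ContinuousOn (fun x => u x 2) C3 := (continuous_apply 2).comp_continuousOn hC3
  -- coefficient integrals
  set A : ℕ → ℕ → ℕ → ℝ := fun a b c => ∫ x in Q3,
    u x 0 * (Real.cos (a * x 0) * Real.sin (b * x 1) * Real.sin (c * x 2)) with hA
  set Bc : ℕ → ℕ → ℕ → ℝ := fun a b c => ∫ x in Q3,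
    u x 1 * (Real.sin (a * x 0) * Real.cos (b * x 1) * Real.sin (c * x 2)) with hBc
  set Cc : ℕ → ℕ → ℕ → ℝ := fun a b c => ∫ x in Q3,
    u x 2 * (Real.sin (a * x 0) * Real.sin (b * x 1) * Real.cos (c * x 2)) with hCc
  have intA : ∀ a b c : ℕ, IntegrableOn
      (fun x => u x 0 * (Real.cos (a * x 0) * Real.sin (b * x 1) * Real.sin (c * x 2)))
      Q3 volume := fun a b c => intQ3 hu0
    (trig_cont _ _ _ Real.continuous_cos Real.continuous_sin Real.continuous_sin a b c).continuousOn
  have intB : ∀ a b c : ℕ, IntegrableOn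
      (fun x => u x 1 * (Real.sin (a * x 0) * Real.cos (b * x 1) * Real.sin (c * x 2)))
      Q3 volume := fun a b c => intQ3 hu1
    (trig_cont _ _ _ Real.continuous_sin Real.continuous_cos Real.continuous_sin a b c).continuousOn
  have intC : ∀ a b c : ℕ, IntegrableOn
      (fun x => u x 2 * (Real.sin (a * x 0) * Real.sin (b * x 1) * Real.cos (c * x 2)))
      Q3 volume := fun a b c => intQ3 hu2
    (trig_cont _ _ _ Real.continuous_sin Real.continuous_sin Real.continuous_cos a b c).continuousOn
  -- relation R1 from TE fields
  have R1 : ∀ a b c : ℕ, ¬(a = 0 ∧ b = 0) → 1 ≤ c →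
      -(b:ℝ) * A a b c + (a:ℝ) * Bc a b c = 0 := by
    intro a b c hab hc
    have h := hTE a b c hab hc
    rw [show {x : V3 | ∀ i, x i ∈ Set.Ioo 0 π} = Q3 from rfl] at h
    have hsplit : ∫ x in Q3, (∑ i, u x i * ETEcube a b c x i)
        = ∫ x in Q3, (-(b:ℝ) * (u x 0 * (Real.cos (a * x 0) * Real.sin (b * x 1) * Real.sin (c * x 2)))
          + (a:ℝ) * (u x 1 * (Real.sin (a * x 0) * Real.cos (b * x 1) * Real.sin (c * x 2)))) := by
      congr 1 with x
      rw [Fin.sum_univ_three]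
      simp [ETEcube]
      ring
    rw [hsplit, int_lin2 (intA a b c) (intB a b c)] at h
    exact h
  -- relation R2 from TM fields
  have R2 : ∀ a b c : ℕ, 1 ≤ a → 1 ≤ b →
      -((a:ℝ) * c) * A a b c + (-((b:ℝ) * c)) * Bc a b c
        + ((a:ℝ)^2 + (b:ℝ)^2) * Cc a b c = 0 := by
    intro a b c ha hb
    have h := hTM a b c ha hb
    rw [show {x : V3 | ∀ i, x i ∈ Set.Ioo 0 π} = Q3 from rfl] at h
    have hsplit : ∫ x in Q3, (∑ i, u x i * ETMcube a b c x i)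
        = ∫ x in Q3, (-((a:ℝ)*c) * (u x 0 * (Real.cos (a * x 0) * Real.sin (b * x 1) * Real.sin (c * x 2)))
          + (-((b:ℝ)*c)) * (u x 1 * (Real.sin (a * x 0) * Real.cos (b * x 1) * Real.sin (c * x 2)))
          + ((a:ℝ)^2 + (b:ℝ)^2) * (u x 2 * (Real.sin (a * x 0) * Real.sin (b * x 1) * Real.cos (c * x 2)))) := by
      congr 1 with x
      rw [Fin.sum_univ_three]
      simp [ETMcube]
      ring
    rw [hsplit, int_lin3 (intA a b c) (intB a b c) (intC a b c)] at h
    exact h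
  -- relation R3 from the divergence theorem
  have R3 : ∀ a b c : ℕ,
      (a:ℝ) * A a b c + (b:ℝ) * Bc a b c + (c:ℝ) * Cc a b c = 0 := by
    intro a b c
    have h := div_ortho u hC3 huC1' hudiv' a b c
    rw [int_lin3 (intA a b c) (intB a b c) (intC a b c)] at h
    exact h
  -- degenerate coefficients vanish automatically
  have Atriv : ∀ a b c : ℕ, b = 0 ∨ c = 0 → A a b c = 0 := by
    intro a b c hbc
    have hzero : (fun x : V3 => u x 0 *
        (Real.cos (a * x 0) * Real.sin (b * x 1) * Real.sin (c * x 2))) = fun _ => (0:ℝ) := by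
      funext x
      rcases hbc with rfl | rfl <;> simp
    rw [hA]
    simp only
    rw [hzero]
    exact integral_zero _ _
  have Btriv : ∀ a b c : ℕ, a = 0 ∨ c = 0 → Bc a b c = 0 := by
    intro a b c hac
    have hzero : (fun x : V3 => u x 1 *
        (Real.sin (a * x 0) * Real.cos (b * x 1) * Real.sin (c * x 2))) = fun _ => (0:ℝ) := by
      funext x
      rcases hac with rfl | rfl <;> simp
    rw [hBc]
    simp only
    rw [hzero]
    exact integral_zero _ _
  have Ctriv : ∀ a b c : ℕ, a = 0 ∨ b = 0 → Cc a b c = 0 := by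
    intro a b c hab
    have hzero : (fun x : V3 => u x 2 *
        (Real.sin (a * x 0) * Real.sin (b * x 1) * Real.cos (c * x 2))) = fun _ => (0:ℝ) := by
      funext x
      rcases hab with rfl | rfl <;> simp
    rw [hCc]
    simp only
    rw [hzero]
    exact integral_zero _ _
  -- all-positive case: all three coefficients vanish
  have hall : ∀ a b c : ℕ, 1 ≤ a → 1 ≤ b → 1 ≤ c →
      A a b c = 0 ∧ Bc a b c = 0 ∧ Cc a b c = 0 := by
    intro a b c ha hb hc
    have r1 := R1 a b c (by rintro ⟨rfl, rfl⟩; omega) hc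
    have r2 := R2 a b c ha hb
    have r3 := R3 a b c
    have ha' : (1:ℝ) ≤ (a:ℝ) := by exact_mod_cast ha
    have hb' : (1:ℝ) ≤ (b:ℝ) := by exact_mod_cast hb
    have hc' : (1:ℝ) ≤ (c:ℝ) := by exact_mod_cast hc
    have hCzero : Cc a b c = 0 := by
      have key : ((a:ℝ)^2 + (b:ℝ)^2 + (c:ℝ)^2) * Cc a b c = 0 := by
        linear_combination r2 + (c:ℝ) * r3
      have hpos : (0:ℝ) < (a:ℝ)^2 + (b:ℝ)^2 + (c:ℝ)^2 := by nlinarith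
      exact (mul_eq_zero.1 key).resolve_left (ne_of_gt hpos)
    have hAzero : A a b c = 0 := by
      have key : ((a:ℝ)^2 + (b:ℝ)^2) * A a b c = 0 := by
        linear_combination (a:ℝ) * r3 - (b:ℝ) * r1 + (a:ℝ) * (c:ℝ) * 0 - (a:ℝ) * (c:ℝ) * hCzero
      have hpos : (0:ℝ) < (a:ℝ)^2 + (b:ℝ)^2 := by nlinarith
      exact (mul_eq_zero.1 key).resolve_left (ne_of_gt hpos)
    have hBzero : Bc a b c = 0 := by
      have key : ((a:ℝ)^2 + (b:ℝ)^2) * Bc a b c = 0 := by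
        linear_combination (b:ℝ) * r3 + (a:ℝ) * r1 + (b:ℝ) * (c:ℝ) * 0 - (b:ℝ) * (c:ℝ) * hCzero
      have hpos : (0:ℝ) < (a:ℝ)^2 + (b:ℝ)^2 := by nlinarith
      exact (mul_eq_zero.1 key).resolve_left (ne_of_gt hpos)
    exact ⟨hAzero, hBzero, hCzero⟩
  -- full vanishing of each coefficient family
  have hAall : ∀ a b c : ℕ, A a b c = 0 := by
    intro a b c
    rcases Nat.eq_zero_or_pos b with rfl | hb
    · exact Atriv a 0 c (Or.inl rfl)
    rcases Nat.eq_zero_or_pos c with rfl | hc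
    · exact Atriv a b 0 (Or.inr rfl)
    rcases Nat.eq_zero_or_pos a with rfl | ha
    · -- use TE with a = 0
      have r1 := R1 0 b c (by rintro ⟨-, rfl⟩; omega) hc
      push_cast at r1
      have hbne : (b:ℝ) ≠ 0 := Nat.cast_ne_zero.mpr (by omega)
      have key : (b:ℝ) * A 0 b c = 0 := by linear_combination -r1
      exact (mul_eq_zero.1 key).resolve_left hbne
    · exact (hall a b c ha hb hc).1
  have hBall : ∀ a b c : ℕ, Bc a b c = 0 := by
    intro a b c
    rcases Nat.eq_zero_or_pos a with rfl | ha
    · exact Btriv 0 b c (Or.inl rfl)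
    rcases Nat.eq_zero_or_pos c with rfl | hc
    · exact Btriv a b 0 (Or.inr rfl)
    rcases Nat.eq_zero_or_pos b with rfl | hb
    · have r1 := R1 a 0 c (by rintro ⟨rfl, -⟩; omega) hc
      push_cast at r1
      have hane : (a:ℝ) ≠ 0 := Nat.cast_ne_zero.mpr (by omega)
      have key : (a:ℝ) * Bc a 0 c = 0 := by linear_combination r1
      exact (mul_eq_zero.1 key).resolve_left hane
    · exact (hall a b c ha hb hc).2.1
  have hCall : ∀ a b c : ℕ, Cc a b c = 0 := by
    intro a b c
    rcases Nat.eq_zero_or_pos a with rfl | ha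
    · exact Ctriv 0 b c (Or.inl rfl)
    rcases Nat.eq_zero_or_pos b with rfl | hb
    · exact Ctriv a 0 c (Or.inr rfl)
    rcases Nat.eq_zero_or_pos c with rfl | hc
    · have r2 := R2 a b 0 ha hb
      push_cast at r2
      have hpos : (0:ℝ) < (a:ℝ)^2 + (b:ℝ)^2 := by
        have ha' : (1:ℝ) ≤ (a:ℝ) := by exact_mod_cast ha
        nlinarith
      have key : ((a:ℝ)^2 + (b:ℝ)^2) * Cc a b 0 = 0 := by linear_combination r2
      exact (mul_eq_zero.1 key).resolve_left (ne_of_gt hpos)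
    · exact (hall a b c ha hb hc).2.2
  -- conclude via completeness of the cosine system
  have hv0 := vanish_pattern0 hu0 (fun k₀ k₁ k₂ => hAall k₀ k₁ k₂)
  have hv1 := vanish_pattern1 hu1 (fun k₀ k₁ k₂ => hBall k₀ k₁ k₂)
  have hv2 := vanish_pattern2 hu2 (fun k₀ k₁ k₂ => hCall k₀ k₁ k₂)
  intro x hx
  funext i
  fin_cases i
  · exact hv0 x hx
  · exact hv1 x hx
  · exact hv2 x hx

end
end

section
/- Let 0 < r₀ < R, ℓ > 0, and Ω := { x ∈ ℝ³ : r₀ < |x⊥| < R, 0 < x₃ < ℓ } with x⊥ = (x₁,x₂). The magnetostatic field H(x) := (−x₂/|x⊥|², x₁/|x⊥|², 0) is not identically zero and satisfies curl H = 0 and div H = 0 on Ω, together with the magnetic boundary conditions: H(x)·(x₁/|x⊥|, x₂/|x⊥|, 0) = 0 on the lateral boundary {|x⊥| ∈ {r₀, R}} and H₃ = 0 on the end faces {x₃ ∈ {0, ℓ}}. -/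
noncomputable section

open Real Set

/-- The magnetostatic field of the coaxial cylinder:
`H(x) = (−x₂/|x⊥|², x₁/|x⊥|², 0)`. -/
def Hstatic (x : V3) : Fin 3 → ℝ :=
  ![-x 1 / (x 0 ^ 2 + x 1 ^ 2), x 0 / (x 0 ^ 2 + x 1 ^ 2), 0]


lemma proj_hasFDerivAt' (i : Fin 3) (x : V3) :
    HasFDerivAt (fun y : V3 => y i) (EuclideanSpace.proj i : V3 →L[ℝ] ℝ) x := by
  exact (EuclideanSpace.proj (𝕜 := ℝ) i).hasFDerivAt

lemma q_hasFDerivAt' (x : V3) : HasFDerivAt (fun y : V3 => (y 0)^2 + (y 1)^2)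
    (((2 * x 0 ^ 1) • (EuclideanSpace.proj 0 : V3 →L[ℝ] ℝ))
      + ((2 * x 1 ^ 1) • (EuclideanSpace.proj 1 : V3 →L[ℝ] ℝ))) x := by
  have h := (((hasDerivAt_pow 2 (x 0)).comp_hasFDerivAt x (proj_hasFDerivAt' 0 x)).add
    ((hasDerivAt_pow 2 (x 1)).comp_hasFDerivAt x (proj_hasFDerivAt' 1 x)))
  exact h.congr_fderiv (by norm_num)

lemma H1_hasFDerivAt (x : V3) (h : (x 0)^2 + (x 1)^2 ≠ 0) :
    HasFDerivAt (fun y : V3 => Hstatic y 1)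
      (x 0 • ((-(((x 0)^2 + (x 1)^2)^2)⁻¹) • (((2 * x 0 ^ 1) • (EuclideanSpace.proj 0 : V3 →L[ℝ] ℝ))
        + ((2 * x 1 ^ 1) • (EuclideanSpace.proj 1 : V3 →L[ℝ] ℝ))))
       + (((x 0)^2 + (x 1)^2)⁻¹) • (EuclideanSpace.proj 0 : V3 →L[ℝ] ℝ)) x := by
  have hH := (proj_hasFDerivAt' 0 x).mul
    ((hasDerivAt_inv h).comp_hasFDerivAt x (q_hasFDerivAt' x))
  refine hH.congr_of_eventuallyEq (Filter.Eventually.of_forall fun y => ?_)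
  simp [Hstatic, div_eq_mul_inv]

lemma H0_hasFDerivAt (x : V3) (h : (x 0)^2 + (x 1)^2 ≠ 0) :
    HasFDerivAt (fun y : V3 => Hstatic y 0)
      ((-(x 1)) • ((-(((x 0)^2 + (x 1)^2)^2)⁻¹) • (((2 * x 0 ^ 1) • (EuclideanSpace.proj 0 : V3 →L[ℝ] ℝ))
        + ((2 * x 1 ^ 1) • (EuclideanSpace.proj 1 : V3 →L[ℝ] ℝ))))
       + (((x 0)^2 + (x 1)^2)⁻¹) • (-(EuclideanSpace.proj 1 : V3 →L[ℝ] ℝ))) x := by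
  have hH := ((proj_hasFDerivAt' 1 x).neg).mul
    ((hasDerivAt_inv h).comp_hasFDerivAt x (q_hasFDerivAt' x))
  refine hH.congr_of_eventuallyEq (Filter.Eventually.of_forall fun y => ?_)
  simp [Hstatic, div_eq_mul_inv]

lemma pd3_H2 (i : Fin 3) (x : V3) : pd3 i (fun y => Hstatic y 2) x = 0 := by
  have : (fun y : V3 => Hstatic y 2) = fun _ => (0:ℝ) := by funext y; simp [Hstatic]
  simp [pd3, this]

/-- in the coaxial cylinder `Ω = {r₀ < |x⊥| < R, 0 < x₃ < ℓ}`, the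
magnetostatic field `H(x) = (−x₂/|x⊥|², x₁/|x⊥|², 0)` is not identically zero,
curl-free and divergence-free, and satisfies the magnetic boundary conditions
`H·n = 0` on the lateral boundary and `H₃ = 0` on the end faces. -/
theorem coax_magnetostatic_mode (r₀ R ℓ : ℝ) (hr₀ : 0 < r₀) (hrR : r₀ < R) (hℓ : 0 < ℓ) :
    (∃ x : V3, (r₀ < Real.sqrt (x 0 ^ 2 + x 1 ^ 2) ∧ Real.sqrt (x 0 ^ 2 + x 1 ^ 2) < R ∧
      0 < x 2 ∧ x 2 < ℓ) ∧ Hstatic x ≠ 0) ∧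
    (∀ x : V3, r₀ < Real.sqrt (x 0 ^ 2 + x 1 ^ 2) → Real.sqrt (x 0 ^ 2 + x 1 ^ 2) < R →
      0 < x 2 → x 2 < ℓ →
      curl3 Hstatic x = (fun _ => (0 : ℝ)) ∧ div3 Hstatic x = 0) ∧
    (∀ x : V3, (Real.sqrt (x 0 ^ 2 + x 1 ^ 2) = r₀ ∨ Real.sqrt (x 0 ^ 2 + x 1 ^ 2) = R) →
      0 ≤ x 2 → x 2 ≤ ℓ →
      (∑ i, Hstatic x i *
        ![x 0 / Real.sqrt (x 0 ^ 2 + x 1 ^ 2), x 1 / Real.sqrt (x 0 ^ 2 + x 1 ^ 2),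
          (0 : ℝ)] i) = 0) ∧
    (∀ x : V3, r₀ ≤ Real.sqrt (x 0 ^ 2 + x 1 ^ 2) → Real.sqrt (x 0 ^ 2 + x 1 ^ 2) ≤ R →
      (x 2 = 0 ∨ x 2 = ℓ) → Hstatic x 2 = 0) := by
  have key : ∀ x : V3, (x 0)^2 + (x 1)^2 ≠ 0 →
      curl3 Hstatic x = (fun _ => (0 : ℝ)) ∧ div3 Hstatic x = 0 := by
    intro x h
    constructor
    · funext i
      fin_cases i
      · show pd3 1 (fun y => Hstatic y 2) x - pd3 2 (fun y => Hstatic y 1) x = 0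
        rw [pd3_H2]
        rw [show pd3 2 (fun y => Hstatic y 1) x = fderiv ℝ (fun y => Hstatic y 1) x
          (EuclideanSpace.single 2 1) from rfl, (H1_hasFDerivAt x h).fderiv]
        simp [EuclideanSpace.single_apply]
      · show pd3 2 (fun y => Hstatic y 0) x - pd3 0 (fun y => Hstatic y 2) x = 0
        rw [pd3_H2]
        rw [show pd3 2 (fun y => Hstatic y 0) x = fderiv ℝ (fun y => Hstatic y 0) x
          (EuclideanSpace.single 2 1) from rfl, (H0_hasFDerivAt x h).fderiv]
        simp [EuclideanSpace.single_apply]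
      · show pd3 0 (fun y => Hstatic y 1) x - pd3 1 (fun y => Hstatic y 0) x = 0
        rw [show pd3 0 (fun y => Hstatic y 1) x = fderiv ℝ (fun y => Hstatic y 1) x
          (EuclideanSpace.single 0 1) from rfl, (H1_hasFDerivAt x h).fderiv]
        rw [show pd3 1 (fun y => Hstatic y 0) x = fderiv ℝ (fun y => Hstatic y 0) x
          (EuclideanSpace.single 1 1) from rfl, (H0_hasFDerivAt x h).fderiv]
        simp [EuclideanSpace.single_apply]
        field_simp
        ring
    · show pd3 0 (fun y => Hstatic y 0) x + pd3 1 (fun y => Hstatic y 1) x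
        + pd3 2 (fun y => Hstatic y 2) x = 0
      rw [pd3_H2]
      rw [show pd3 0 (fun y => Hstatic y 0) x = fderiv ℝ (fun y => Hstatic y 0) x
        (EuclideanSpace.single 0 1) from rfl, (H0_hasFDerivAt x h).fderiv]
      rw [show pd3 1 (fun y => Hstatic y 1) x = fderiv ℝ (fun y => Hstatic y 1) x
        (EuclideanSpace.single 1 1) from rfl, (H1_hasFDerivAt x h).fderiv]
      simp [EuclideanSpace.single_apply]
      field_simp
      ring
  refine ⟨?_, ?_, ?_, ?_⟩
  · set m : ℝ := (r₀ + R) / 2 with hm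
    have hm0 : 0 < m := by rw [hm]; linarith
    refine ⟨(WithLp.toLp 2 ![m, 0, ℓ/2] : V3), ⟨?_, ?_, ?_, ?_⟩, ?_⟩
    · show r₀ < Real.sqrt (m ^ 2 + (0:ℝ) ^ 2)
      rw [show m ^ 2 + (0:ℝ) ^ 2 = m ^ 2 by ring, Real.sqrt_sq hm0.le]
      linarith
    · show Real.sqrt (m ^ 2 + (0:ℝ) ^ 2) < R
      rw [show m ^ 2 + (0:ℝ) ^ 2 = m ^ 2 by ring, Real.sqrt_sq hm0.le]
      linarith
    · show (0:ℝ) < ℓ / 2; linarith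
    · show ℓ / 2 < ℓ; linarith
    · intro hcontra
      have h1 := congrFun hcontra 1
      have hx0 : ((WithLp.toLp 2 ![m, 0, ℓ/2] : V3)) 0 = m := rfl
      have hx1 : ((WithLp.toLp 2 ![m, 0, ℓ/2] : V3)) 1 = 0 := rfl
      rw [Pi.zero_apply] at h1
      simp only [Hstatic, hx0, hx1] at h1
      norm_num at h1
      exact hm0.ne' h1
  · intro x hx1 hx2 _ _
    apply key
    intro h0
    rw [h0, Real.sqrt_zero] at hx1
    linarith
  · intro x _ _ _
    rw [Fin.sum_univ_three]
    simp [Hstatic]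
    ring
  · intro x _ _ _
    simp [Hstatic]


end
end

section
/- Let Ω ⊆ ℝ³ \ {0} be open and q : Ω → ℝ be smooth (C^∞). Define the spherical Debye ansatz M[q] := curl(x ↦ q(x)·x/|x|) and N[q] := curl M[q]. Then on Ω: N[q](x) = ∇(∂_ρ q)(x) − (x/|x|)·(|x|·Δ(q/|x|)(x)) where ∂_ρ q(x) = ∇q(x)·(x/|x|), and curl N[q] = −M[ x ↦ |x|·Δ(q/|x|)(x) ], i.e. curl curl curl(q·x/|x|) = −curl( (|x|·Δ(q/|x|))·x/|x| ). -/
noncomputable section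

open Real Set
open scoped ContDiff

/-- The spherical Debye ansatz `M[q] = curl(q·x/|x|)`. -/
def Msph (q : V3 → ℝ) : V3 → Fin 3 → ℝ := curl3 (fun y => fun i => q y * y i / ‖y‖)

/-- The scalar operator `q ↦ |x|·Δ(q/|x|)`. -/
def Lsph (q : V3 → ℝ) (y : V3) : ℝ := ‖y‖ * lap3 (fun z => q z / ‖z‖) y

/-- The radial derivative `∂_ρ q(x) = ∇q(x)·(x/|x|)`. -/
def radialDeriv (q : V3 → ℝ) (y : V3) : ℝ := ∑ j, pd3 j q y * (y j / ‖y‖)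

namespace SDaux

abbrev e3 (i : Fin 3) : V3 := EuclideanSpace.single i 1

lemma pd3_congr {f g : V3 → ℝ} {x : V3} (h : f =ᶠ[nhds x] g) (i : Fin 3) :
    pd3 i f x = pd3 i g x := by
  unfold pd3; rw [h.fderiv_eq]

lemma pd3_add {f g : V3 → ℝ} {x : V3} (hf : DifferentiableAt ℝ f x)
    (hg : DifferentiableAt ℝ g x) (i : Fin 3) :
    pd3 i (fun y => f y + g y) x = pd3 i f x + pd3 i g x := by
  unfold pd3; rw [fderiv_fun_add hf hg]; simp

lemma pd3_sub {f g : V3 → ℝ} {x : V3} (hf : DifferentiableAt ℝ f x)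
    (hg : DifferentiableAt ℝ g x) (i : Fin 3) :
    pd3 i (fun y => f y - g y) x = pd3 i f x - pd3 i g x := by
  unfold pd3; rw [fderiv_fun_sub hf hg]; simp

lemma pd3_mul {f g : V3 → ℝ} {x : V3} (hf : DifferentiableAt ℝ f x)
    (hg : DifferentiableAt ℝ g x) (i : Fin 3) :
    pd3 i (fun y => f y * g y) x = pd3 i f x * g x + f x * pd3 i g x := by
  unfold pd3; rw [fderiv_fun_mul hf hg]
  simp [ContinuousLinearMap.add_apply, ContinuousLinearMap.smul_apply, smul_eq_mul]
  ring

lemma diffAt_coord {x : V3} (i : Fin 3) : DifferentiableAt ℝ (fun y : V3 => y i) x :=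
  (EuclideanSpace.proj (𝕜 := ℝ) i).differentiableAt

lemma pd3_coord {x : V3} (i j : Fin 3) :
    pd3 j (fun y : V3 => y i) x = if i = j then 1 else 0 := by
  have h : (fun y : V3 => y i) = (EuclideanSpace.proj (𝕜 := ℝ) i) := rfl
  unfold pd3
  rw [h, ContinuousLinearMap.fderiv]
  simp [PiLp.proj_apply, EuclideanSpace.single_apply]

lemma norm_hasFDerivAt {x : V3} (hx0 : x ≠ 0) :
    ∃ φ : V3 →L[ℝ] ℝ, HasFDerivAt (fun y : V3 => ‖y‖) φ x ∧
      ∀ j, φ (e3 j) = x j / ‖x‖ := by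
  have hinner : HasFDerivAt (fun y : V3 => (inner ℝ y y : ℝ))
      ((fderivInnerCLM ℝ (x, x)).comp ((ContinuousLinearMap.id ℝ V3).prod
        (ContinuousLinearMap.id ℝ V3))) x :=
    (hasFDerivAt_id x).inner ℝ (hasFDerivAt_id x)
  have hxx : (inner ℝ x x : ℝ) = ‖x‖ ^ 2 := real_inner_self_eq_norm_sq x
  have hne : (inner ℝ x x : ℝ) ≠ 0 := by
    rw [hxx]; exact pow_ne_zero 2 (norm_ne_zero_iff.2 hx0)
  have hsqrt : HasDerivAt Real.sqrt (1 / (2 * Real.sqrt ((inner ℝ x x : ℝ)))) ((inner ℝ x x : ℝ)) :=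
    Real.hasDerivAt_sqrt hne
  have hcomp := hsqrt.comp_hasFDerivAt (f := fun y : V3 => (inner ℝ y y : ℝ)) x hinner
  have hfun : (Real.sqrt ∘ fun y : V3 => (inner ℝ y y : ℝ)) = fun y : V3 => ‖y‖ := by
    funext y
    rw [Function.comp_apply, real_inner_self_eq_norm_sq, Real.sqrt_sq (norm_nonneg y)]
  rw [hfun] at hcomp
  refine ⟨_, hcomp, fun j => ?_⟩
  have h1 : Real.sqrt ((inner ℝ x x : ℝ)) = ‖x‖ := by
    rw [hxx]; exact Real.sqrt_sq (norm_nonneg x)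
  have h2 : (inner ℝ x (e3 j) : ℝ) = x j := by
    simp [e3, EuclideanSpace.inner_single_right]
  have hr : ‖x‖ ≠ 0 := norm_ne_zero_iff.2 hx0
  simp only [ContinuousLinearMap.smul_apply, ContinuousLinearMap.comp_apply,
    ContinuousLinearMap.prod_apply, ContinuousLinearMap.coe_id', id_eq,
    fderivInnerCLM_apply, smul_eq_mul]
  have h2' : (inner ℝ (e3 j) x : ℝ) = x j := by
    simp [e3, EuclideanSpace.inner_single_left]
  rw [h2', h2, h1]
  field_simp
  ring


lemma pd3_norm {x : V3} (hx0 : x ≠ 0) (j : Fin 3) :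
    pd3 j (fun y : V3 => ‖y‖) x = x j / ‖x‖ := by
  obtain ⟨φ, hφ, hval⟩ := norm_hasFDerivAt hx0
  unfold pd3; rw [hφ.fderiv]; exact hval j

lemma diffAt_norm {x : V3} (hx0 : x ≠ 0) : DifferentiableAt ℝ (fun y : V3 => ‖y‖) x :=
  (norm_hasFDerivAt hx0).choose_spec.1.differentiableAt

lemma diffAt_invnorm {x : V3} (hx0 : x ≠ 0) :
    DifferentiableAt ℝ (fun y : V3 => ‖y‖⁻¹) x :=
  (diffAt_norm hx0).inv (norm_ne_zero_iff.2 hx0)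

lemma pd3_invnorm {x : V3} (hx0 : x ≠ 0) (j : Fin 3) :
    pd3 j (fun y : V3 => ‖y‖⁻¹) x = -(x j) / ‖x‖ ^ 3 := by
  obtain ⟨φ, hφ, hval⟩ := norm_hasFDerivAt hx0
  have hr : ‖x‖ ≠ 0 := norm_ne_zero_iff.2 hx0
  have hinv : HasDerivAt (fun t : ℝ => t⁻¹) (-(‖x‖ ^ 2)⁻¹) ‖x‖ := hasDerivAt_inv hr
  have h := hinv.comp_hasFDerivAt (f := fun y : V3 => ‖y‖) x hφ
  have hfun : ((fun t : ℝ => t⁻¹) ∘ fun y : V3 => ‖y‖) = fun y : V3 => ‖y‖⁻¹ := rfl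
  rw [hfun] at h
  unfold pd3
  rw [h.fderiv]
  simp only [ContinuousLinearMap.smul_apply, smul_eq_mul]
  rw [hval j]
  rw [neg_div, neg_mul, neg_inj, eq_div_iff (pow_ne_zero 3 hr), mul_comm,
    ← mul_assoc]
  field_simp

lemma cAt_norm {x : V3} (hx0 : x ≠ 0) : ContDiffAt ℝ ∞ (fun y : V3 => ‖y‖) x :=
  contDiffAt_norm ℝ hx0

lemma cAt_invnorm {x : V3} (hx0 : x ≠ 0) : ContDiffAt ℝ ∞ (fun y : V3 => ‖y‖⁻¹) x :=
  (contDiffAt_norm ℝ hx0).inv (norm_ne_zero_iff.2 hx0)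

lemma cOn_norm {Ω : Set V3} (hne : ∀ y ∈ Ω, (y : V3) ≠ 0) :
    ContDiffOn ℝ ∞ (fun y : V3 => ‖y‖) Ω :=
  fun y hy => (cAt_norm (hne y hy)).contDiffWithinAt

lemma cOn_invnorm {Ω : Set V3} (hne : ∀ y ∈ Ω, (y : V3) ≠ 0) :
    ContDiffOn ℝ ∞ (fun y : V3 => ‖y‖⁻¹) Ω :=
  fun y hy => (cAt_invnorm (hne y hy)).contDiffWithinAt

lemma cOn_coord {Ω : Set V3} (i : Fin 3) : ContDiffOn ℝ ∞ (fun y : V3 => y i) Ω :=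
  (EuclideanSpace.proj (𝕜 := ℝ) i).contDiff.contDiffOn

lemma cOn_pd3 {Ω : Set V3} {f : V3 → ℝ} (hΩ : IsOpen Ω)
    (hf : ContDiffOn ℝ ∞ f Ω) (i : Fin 3) : ContDiffOn ℝ ∞ (pd3 i f) Ω := by
  have h1 : ContDiffOn ℝ ∞ (fderiv ℝ f) Ω := hf.fderiv_of_isOpen hΩ (by norm_cast)
  exact h1.clm_apply contDiffOn_const

lemma diffAt_of_cOn {Ω : Set V3} {f : V3 → ℝ} {x : V3} (hΩ : IsOpen Ω)
    (hf : ContDiffOn ℝ ∞ f Ω) (hx : x ∈ Ω) : DifferentiableAt ℝ f x :=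
  (hf.contDiffAt (hΩ.mem_nhds hx)).differentiableAt (by norm_cast)

lemma cAt_of_cOn {Ω : Set V3} {f : V3 → ℝ} {x : V3} (hΩ : IsOpen Ω)
    (hf : ContDiffOn ℝ ∞ f Ω) (hx : x ∈ Ω) : ContDiffAt ℝ ∞ f x :=
  hf.contDiffAt (hΩ.mem_nhds hx)

lemma pd3_pd3 {f : V3 → ℝ} {x : V3} (hf : ContDiffAt ℝ ∞ f x) (i j : Fin 3) :
    pd3 i (pd3 j f) x = fderiv ℝ (fderiv ℝ f) x (e3 i) (e3 j) := by
  have hd : DifferentiableAt ℝ (fderiv ℝ f) x :=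
    (hf.fderiv_right (m := 1) (by norm_cast)).differentiableAt one_ne_zero
  show fderiv ℝ (fun y => (fderiv ℝ f y) (e3 j)) x (e3 i) = _
  rw [fderiv_clm_apply hd (differentiableAt_const _)]
  simp

lemma pd3_comm {f : V3 → ℝ} {x : V3} (hf : ContDiffAt ℝ ∞ f x) (i j : Fin 3) :
    pd3 i (pd3 j f) x = pd3 j (pd3 i f) x := by
  rw [pd3_pd3 hf, pd3_pd3 hf]
  exact (hf.isSymmSndFDerivAt (by simp; exact WithTop.coe_le_coe.2 le_top)).eq _ _


section Elayer

variable {Ω : Set V3} {q : V3 → ℝ} {x : V3}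

lemma diffAt_g (hx0 : x ≠ 0) (hqd : DifferentiableAt ℝ q x) :
    DifferentiableAt ℝ (fun y : V3 => q y / ‖y‖) x := by
  have heq : (fun y : V3 => q y / ‖y‖) = fun y : V3 => q y * ‖y‖⁻¹ :=
    funext fun y => div_eq_mul_inv _ _
  rw [heq]; exact hqd.mul (diffAt_invnorm hx0)

lemma pd3_g (hx0 : x ≠ 0) (hqd : DifferentiableAt ℝ q x) (j : Fin 3) :
    pd3 j (fun y : V3 => q y / ‖y‖) x
      = pd3 j q x * ‖x‖⁻¹ + q x * (-(x j) / ‖x‖ ^ 3) := by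
  have heq : (fun y : V3 => q y / ‖y‖) = fun y : V3 => q y * ‖y‖⁻¹ :=
    funext fun y => div_eq_mul_inv _ _
  rw [heq, pd3_mul hqd (diffAt_invnorm hx0), pd3_invnorm hx0]

lemma cOn_g (hne : ∀ y ∈ Ω, (y : V3) ≠ 0) (hq : ContDiffOn ℝ ∞ q Ω) :
    ContDiffOn ℝ ∞ (fun y : V3 => q y / ‖y‖) Ω := by
  have heq : (fun y : V3 => q y / ‖y‖) = fun y : V3 => q y * ‖y‖⁻¹ :=
    funext fun y => div_eq_mul_inv _ _
  rw [heq]; exact hq.mul (cOn_invnorm hne)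

lemma cOn_u (hne : ∀ y ∈ Ω, (y : V3) ≠ 0) (hq : ContDiffOn ℝ ∞ q Ω) (k : Fin 3) :
    ContDiffOn ℝ ∞ (fun y : V3 => q y * y k / ‖y‖) Ω := by
  have heq : (fun y : V3 => q y * y k / ‖y‖) = fun y : V3 => (q y * y k) * ‖y‖⁻¹ :=
    funext fun y => div_eq_mul_inv _ _
  rw [heq]; exact (hq.mul (cOn_coord k)).mul (cOn_invnorm hne)

/-- first derivative of the Debye potential field components -/
lemma pd3_u (hx0 : x ≠ 0) (hqd : DifferentiableAt ℝ q x) (k j : Fin 3) :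
    pd3 j (fun y : V3 => q y * y k / ‖y‖) x
      = pd3 j (fun y : V3 => q y / ‖y‖) x * x k
        + (if k = j then q x / ‖x‖ else 0) := by
  have heq : (fun y : V3 => q y * y k / ‖y‖)
      = fun y : V3 => (q y / ‖y‖) * y k := funext fun y => by ring
  rw [heq, pd3_mul (diffAt_g hx0 hqd) (diffAt_coord k), pd3_coord]
  rcases eq_or_ne k j with h | h
  · simp [h]
  · simp [h]

/-- second derivatives of the Debye potential field components -/
lemma pd3_pd3_u (hΩ : IsOpen Ω) (hne : ∀ y ∈ Ω, (y : V3) ≠ 0)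
    (hq : ContDiffOn ℝ ∞ q Ω) (hx : x ∈ Ω) (k a b : Fin 3) :
    pd3 a (pd3 b (fun y : V3 => q y * y k / ‖y‖)) x
      = pd3 a (pd3 b (fun y : V3 => q y / ‖y‖)) x * x k
        + (if k = a then pd3 b (fun y : V3 => q y / ‖y‖) x else 0)
        + (if k = b then pd3 a (fun y : V3 => q y / ‖y‖) x else 0) := by
  have hgOn := cOn_g hne hq
  have hPb : DifferentiableAt ℝ (pd3 b (fun y : V3 => q y / ‖y‖)) x :=
    diffAt_of_cOn hΩ (cOn_pd3 hΩ hgOn b) hx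
  have hgd : DifferentiableAt ℝ (fun y : V3 => q y / ‖y‖) x :=
    diffAt_g (hne x hx) (diffAt_of_cOn hΩ hq hx)
  have hev : pd3 b (fun y : V3 => q y * y k / ‖y‖)
      =ᶠ[nhds x] fun y => pd3 b (fun z : V3 => q z / ‖z‖) y * y k
        + (if k = b then (fun z : V3 => q z / ‖z‖) y else 0) := by
    refine Filter.eventuallyEq_of_mem (hΩ.mem_nhds hx) (fun y hy => ?_)
    exact pd3_u (hne y hy) (diffAt_of_cOn hΩ hq hy) k b
  rw [pd3_congr hev a]
  rcases eq_or_ne k b with h | h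
  · simp only [if_pos h]
    rw [pd3_add (hPb.fun_mul (diffAt_coord k)) hgd a,
      pd3_mul hPb (diffAt_coord k) a, pd3_coord]
    rcases eq_or_ne k a with h2 | h2
    · simp [h2]
    · simp [h2]
  · simp only [if_neg h, add_zero]
    rw [pd3_mul hPb (diffAt_coord k) a, pd3_coord]
    rcases eq_or_ne k a with h2 | h2
    · simp [h2]
    · simp [h2]

/-- the norm-squared identity -/
lemma normsq (y : V3) : y 0 ^ 2 + y 1 ^ 2 + y 2 ^ 2 = ‖y‖ ^ 2 := by
  have h := EuclideanSpace.norm_eq y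
  rw [h, Real.sq_sqrt (by positivity)]
  simp [Fin.sum_univ_three, Real.norm_eq_abs, sq_abs]

/-- pointwise identity for the radial derivative in terms of g = q/r -/
lemma radial_eq (hx0 : x ≠ 0) (hqd : DifferentiableAt ℝ q x) :
    radialDeriv q x
      = pd3 0 (fun z : V3 => q z / ‖z‖) x * x 0
        + pd3 1 (fun z : V3 => q z / ‖z‖) x * x 1
        + pd3 2 (fun z : V3 => q z / ‖z‖) x * x 2
        + q x / ‖x‖ := by
  have hr : ‖x‖ ≠ 0 := norm_ne_zero_iff.2 hx0
  have hsq := normsq x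
  unfold radialDeriv
  rw [Fin.sum_univ_three, pd3_g hx0 hqd 0, pd3_g hx0 hqd 1, pd3_g hx0 hqd 2]
  field_simp
  linear_combination (q x) * hsq


lemma pd3_add4 {f1 f2 f3 f4 : V3 → ℝ} {x : V3} (h1 : DifferentiableAt ℝ f1 x)
    (h2 : DifferentiableAt ℝ f2 x) (h3 : DifferentiableAt ℝ f3 x)
    (h4 : DifferentiableAt ℝ f4 x) (i : Fin 3) :
    pd3 i (fun y => f1 y + f2 y + f3 y + f4 y) x
      = pd3 i f1 x + pd3 i f2 x + pd3 i f3 x + pd3 i f4 x := by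
  rw [pd3_add ((h1.fun_add h2).fun_add h3) h4, pd3_add (h1.fun_add h2) h3, pd3_add h1 h2]

lemma cOn_D (hΩ : IsOpen Ω) (hne : ∀ y ∈ Ω, (y : V3) ≠ 0) (hq : ContDiffOn ℝ ∞ q Ω) :
    ContDiffOn ℝ ∞ (radialDeriv q) Ω := by
  have heq : radialDeriv q = fun y => pd3 0 q y * (y 0 * ‖y‖⁻¹)
      + pd3 1 q y * (y 1 * ‖y‖⁻¹) + pd3 2 q y * (y 2 * ‖y‖⁻¹) := by
    funext y; unfold radialDeriv; rw [Fin.sum_univ_three]; ring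
  rw [heq]
  exact (((cOn_pd3 hΩ hq 0).mul ((cOn_coord 0).mul (cOn_invnorm hne))).add
    ((cOn_pd3 hΩ hq 1).mul ((cOn_coord 1).mul (cOn_invnorm hne)))).add
    ((cOn_pd3 hΩ hq 2).mul ((cOn_coord 2).mul (cOn_invnorm hne)))

lemma pd3_D (hΩ : IsOpen Ω) (hne : ∀ y ∈ Ω, (y : V3) ≠ 0)
    (hq : ContDiffOn ℝ ∞ q Ω) (hx : x ∈ Ω) (a : Fin 3) :
    pd3 a (radialDeriv q) x
      = pd3 a (pd3 0 (fun z : V3 => q z / ‖z‖)) x * x 0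
        + pd3 a (pd3 1 (fun z : V3 => q z / ‖z‖)) x * x 1
        + pd3 a (pd3 2 (fun z : V3 => q z / ‖z‖)) x * x 2
        + 2 * pd3 a (fun z : V3 => q z / ‖z‖) x := by
  have hgOn := cOn_g hne hq
  have hP : ∀ j : Fin 3, DifferentiableAt ℝ (pd3 j (fun z : V3 => q z / ‖z‖)) x :=
    fun j => diffAt_of_cOn hΩ (cOn_pd3 hΩ hgOn j) hx
  have hgd : DifferentiableAt ℝ (fun z : V3 => q z / ‖z‖) x :=
    diffAt_g (hne x hx) (diffAt_of_cOn hΩ hq hx)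
  have hev : radialDeriv q =ᶠ[nhds x]
      fun y => pd3 0 (fun z : V3 => q z / ‖z‖) y * y 0
        + pd3 1 (fun z : V3 => q z / ‖z‖) y * y 1
        + pd3 2 (fun z : V3 => q z / ‖z‖) y * y 2
        + q y / ‖y‖ := by
    refine Filter.eventuallyEq_of_mem (hΩ.mem_nhds hx) (fun y hy => ?_)
    exact radial_eq (hne y hy) (diffAt_of_cOn hΩ hq hy)
  rw [pd3_congr hev a,
    pd3_add4 ((hP 0).fun_mul (diffAt_coord 0)) ((hP 1).fun_mul (diffAt_coord 1))
      ((hP 2).fun_mul (diffAt_coord 2)) hgd a,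
    pd3_mul (hP 0) (diffAt_coord 0) a, pd3_mul (hP 1) (diffAt_coord 1) a,
    pd3_mul (hP 2) (diffAt_coord 2) a, pd3_coord, pd3_coord, pd3_coord]
  fin_cases a <;> simp <;> ring


lemma part1 (hΩ : IsOpen Ω) (hne : ∀ y ∈ Ω, (y : V3) ≠ 0)
    (hq : ContDiffOn ℝ ∞ q Ω) (hx : x ∈ Ω) :
    curl3 (Msph q) x = fun i => grad3 (radialDeriv q) x i - (x i / ‖x‖) * Lsph q x := by
  have hr : ‖x‖ ≠ 0 := norm_ne_zero_iff.2 (hne x hx)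
  have hcAtg : ContDiffAt ℝ ∞ (fun z : V3 => q z / ‖z‖) x :=
    cAt_of_cOn hΩ (cOn_g hne hq) hx
  have hdu : ∀ k b : Fin 3, DifferentiableAt ℝ (pd3 b (fun y : V3 => q y * y k / ‖y‖)) x :=
    fun k b => diffAt_of_cOn hΩ (cOn_pd3 hΩ (cOn_u hne hq k) b) hx
  funext i
  fin_cases i
  · simp only [Msph, curl3, grad3, Lsph, lap3, Matrix.cons_val_zero, Matrix.cons_val_one,
      Matrix.head_cons, Matrix.cons_val_two, Matrix.tail_cons, Fin.reduceFinMk, Fin.isValue]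
    rw [pd3_sub (hdu 1 0) (hdu 0 1) 1, pd3_sub (hdu 0 2) (hdu 2 0) 2,
      pd3_pd3_u hΩ hne hq hx 1 1 0, pd3_pd3_u hΩ hne hq hx 0 1 1,
      pd3_pd3_u hΩ hne hq hx 0 2 2, pd3_pd3_u hΩ hne hq hx 2 2 0,
      pd3_D hΩ hne hq hx 0]
    simp only [show ((1:Fin 3) = 1) = True by simp, show ((0:Fin 3) = 1) = False by simp,
      show ((0:Fin 3) = 2) = False by simp, show ((2:Fin 3) = 2) = True by simp,
      show ((2:Fin 3) = 0) = False by simp, show ((1:Fin 3) = 0) = False by simp,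
      show ((1:Fin 3) = 2) = False by simp, show ((2:Fin 3) = 1) = False by simp,
      show ((0:Fin 3) = 0) = True by simp, if_true, if_false]
    rw [pd3_comm hcAtg 1 0, pd3_comm hcAtg 2 0]
    field_simp
    ring
  · simp only [Msph, curl3, grad3, Lsph, lap3, Matrix.cons_val_zero, Matrix.cons_val_one,
      Matrix.head_cons, Matrix.cons_val_two, Matrix.tail_cons, Fin.reduceFinMk, Fin.isValue]
    rw [pd3_sub (hdu 2 1) (hdu 1 2) 2, pd3_sub (hdu 1 0) (hdu 0 1) 0,
      pd3_pd3_u hΩ hne hq hx 2 2 1, pd3_pd3_u hΩ hne hq hx 1 2 2,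
      pd3_pd3_u hΩ hne hq hx 1 0 0, pd3_pd3_u hΩ hne hq hx 0 0 1,
      pd3_D hΩ hne hq hx 1]
    simp only [show ((1:Fin 3) = 1) = True by simp, show ((0:Fin 3) = 1) = False by simp,
      show ((0:Fin 3) = 2) = False by simp, show ((2:Fin 3) = 2) = True by simp,
      show ((2:Fin 3) = 0) = False by simp, show ((1:Fin 3) = 0) = False by simp,
      show ((1:Fin 3) = 2) = False by simp, show ((2:Fin 3) = 1) = False by simp,
      show ((0:Fin 3) = 0) = True by simp, if_true, if_false]
    rw [pd3_comm hcAtg 2 1, pd3_comm hcAtg 0 1]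
    field_simp
    ring
  · simp only [Msph, curl3, grad3, Lsph, lap3, Matrix.cons_val_zero, Matrix.cons_val_one,
      Matrix.head_cons, Matrix.cons_val_two, Matrix.tail_cons, Fin.reduceFinMk, Fin.isValue]
    rw [pd3_sub (hdu 0 2) (hdu 2 0) 0, pd3_sub (hdu 2 1) (hdu 1 2) 1,
      pd3_pd3_u hΩ hne hq hx 0 0 2, pd3_pd3_u hΩ hne hq hx 2 0 0,
      pd3_pd3_u hΩ hne hq hx 2 1 1, pd3_pd3_u hΩ hne hq hx 1 1 2,
      pd3_D hΩ hne hq hx 2]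
    simp only [show ((1:Fin 3) = 1) = True by simp, show ((0:Fin 3) = 1) = False by simp,
      show ((0:Fin 3) = 2) = False by simp, show ((2:Fin 3) = 2) = True by simp,
      show ((2:Fin 3) = 0) = False by simp, show ((1:Fin 3) = 0) = False by simp,
      show ((1:Fin 3) = 2) = False by simp, show ((2:Fin 3) = 1) = False by simp,
      show ((0:Fin 3) = 0) = True by simp, if_true, if_false]
    rw [pd3_comm hcAtg 0 2, pd3_comm hcAtg 1 2]
    field_simp
    ring

lemma part2 (hΩ : IsOpen Ω) (hne : ∀ y ∈ Ω, (y : V3) ≠ 0)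
    (hq : ContDiffOn ℝ ∞ q Ω) (hx : x ∈ Ω) :
    curl3 (curl3 (Msph q)) x = fun i => -(Msph (Lsph q) x i) := by
  have hgOn := cOn_g hne hq
  have hD_cOn := cOn_D hΩ hne hq
  have hcAtD : ContDiffAt ℝ ∞ (radialDeriv q) x := cAt_of_cOn hΩ hD_cOn hx
  have hdD : ∀ a : Fin 3, DifferentiableAt ℝ (pd3 a (radialDeriv q)) x :=
    fun a => diffAt_of_cOn hΩ (cOn_pd3 hΩ hD_cOn a) hx
  have hlap_cOn : ContDiffOn ℝ ∞ (fun y : V3 => lap3 (fun z => q z / ‖z‖) y) Ω := by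
    have heq : (fun y : V3 => lap3 (fun z => q z / ‖z‖) y)
        = fun y => pd3 0 (pd3 0 (fun z : V3 => q z / ‖z‖)) y
          + pd3 1 (pd3 1 (fun z : V3 => q z / ‖z‖)) y
          + pd3 2 (pd3 2 (fun z : V3 => q z / ‖z‖)) y := rfl
    rw [heq]
    exact ((cOn_pd3 hΩ (cOn_pd3 hΩ hgOn 0) 0).add
      (cOn_pd3 hΩ (cOn_pd3 hΩ hgOn 1) 1)).add (cOn_pd3 hΩ (cOn_pd3 hΩ hgOn 2) 2)
  have hLq_cOn : ContDiffOn ℝ ∞ (Lsph q) Ω := by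
    have heq : Lsph q = fun y : V3 => ‖y‖ * lap3 (fun z => q z / ‖z‖) y := rfl
    rw [heq]
    exact (cOn_norm hne).mul hlap_cOn
  have hdP : ∀ k : Fin 3, DifferentiableAt ℝ (fun y : V3 => Lsph q y * y k / ‖y‖) x :=
    fun k => diffAt_of_cOn hΩ (cOn_u hne hLq_cOn k) hx
  set N := curl3 (Msph q) with hN
  have hevc : ∀ k : Fin 3, (fun y => N y k) =ᶠ[nhds x]
      (fun y => pd3 k (radialDeriv q) y - Lsph q y * y k / ‖y‖) := by
    intro k
    refine Filter.eventuallyEq_of_mem (hΩ.mem_nhds hx) (fun y hy => ?_)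
    have h := congrFun (part1 hΩ hne hq hy) k
    rw [hN] at *
    rw [h]
    fin_cases k <;>
      simp only [grad3, Matrix.cons_val_zero, Matrix.cons_val_one, Matrix.head_cons,
        Matrix.cons_val_two, Matrix.tail_cons, Fin.reduceFinMk, Fin.isValue] <;> ring
  funext i
  fin_cases i
  · simp only [curl3, Msph, Matrix.cons_val_zero, Matrix.cons_val_one, Matrix.head_cons,
      Matrix.cons_val_two, Matrix.tail_cons, Fin.reduceFinMk, Fin.isValue]
    rw [pd3_congr (hevc 2) 1, pd3_congr (hevc 1) 2,
      pd3_sub (hdD 2) (hdP 2) 1, pd3_sub (hdD 1) (hdP 1) 2,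
      pd3_comm hcAtD 1 2]
    ring
  · simp only [curl3, Msph, Matrix.cons_val_zero, Matrix.cons_val_one, Matrix.head_cons,
      Matrix.cons_val_two, Matrix.tail_cons, Fin.reduceFinMk, Fin.isValue]
    rw [pd3_congr (hevc 0) 2, pd3_congr (hevc 2) 0,
      pd3_sub (hdD 0) (hdP 0) 2, pd3_sub (hdD 2) (hdP 2) 0,
      pd3_comm hcAtD 2 0]
    ring
  · simp only [curl3, Msph, Matrix.cons_val_zero, Matrix.cons_val_one, Matrix.head_cons,
      Matrix.cons_val_two, Matrix.tail_cons, Fin.reduceFinMk, Fin.isValue]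
    rw [pd3_congr (hevc 1) 0, pd3_congr (hevc 0) 1,
      pd3_sub (hdD 1) (hdP 1) 0, pd3_sub (hdD 0) (hdP 0) 1,
      pd3_comm hcAtD 0 1]
    ring

end Elayer
end SDaux

/-- for a smooth potential `q` on an open `Ω ⊆ ℝ³ \ {0}`, the spherical
Debye fields `M[q] = curl(q·x/|x|)` and `N[q] = curl M[q]` satisfy
`N[q] = ∇(∂_ρ q) − (x/|x|)·(|x|·Δ(q/|x|))` and `curl N[q] = −M[|x|·Δ(q/|x|)]` on `Ω`. -/
theorem spherical_debye_formulas (Ω : Set V3) (hΩ : IsOpen Ω) (hΩ0 : (0 : V3) ∉ Ω)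
    (q : V3 → ℝ) (hq : ContDiffOn ℝ ∞ q Ω) :
    ∀ x ∈ Ω,
      curl3 (Msph q) x =
        (fun i => grad3 (radialDeriv q) x i - (x i / ‖x‖) * Lsph q x) ∧
      curl3 (curl3 (Msph q)) x = (fun i => -(Msph (Lsph q) x i)) := by
  intro x hx
  have hne : ∀ y ∈ Ω, (y : V3) ≠ 0 := fun y hy h => hΩ0 (h ▸ hy)
  exact ⟨SDaux.part1 hΩ hne hq hx, SDaux.part2 hΩ hne hq hx⟩

end
end

section
/- Let n ∈ ℕ, k ∈ ℝ with k ≠ 0, let P : ℝ³ → ℝ be a harmonic function (ΔP = 0 on ℝ³) that is positively homogeneous of degree n (P(t·x) = tⁿ·P(x) for all t > 0, x ∈ ℝ³), and let ψ : (0,∞) → ℝ be C^∞ satisfying ψ''(ρ) + (k² − n(n+1)/ρ²)·ψ(ρ) = 0 for all ρ > 0. Define q(x) := P(x/|x|)·ψ(|x|) on ℝ³ \ {0}. Then |x|·Δ(q/|x|)(x) = −k²·q(x) on ℝ³ \ {0}, and consequently the field M[q] := curl(q·x/|x|) satisfies curl curl M[q] = k²·M[q] and div M[q] = 0 on ℝ³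 \ {0}. -/
noncomputable section

open Real Set
open scoped ContDiff

/-- The Debye potential `q(x) = P(x/|x|)·ψ(|x|)` built from a spherical harmonic (the
restriction to the sphere of a homogeneous harmonic polynomial `P`) and a radial
profile `ψ`. -/
def debyePot (P : V3 → ℝ) (ψ : ℝ → ℝ) (x : V3) : ℝ := P (‖x‖⁻¹ • x) * ψ ‖x‖


/-! ### Auxiliary lemmas -/

section AuxLemmas

lemma two_le_inf : (2 : WithTop ℕ∞) ≤ ∞ := by decide
lemma one_le_inf : (∞ : WithTop ℕ∞) ≠ 0 := by decide
lemma infp1_le : ∞ + 1 ≤ (∞ : WithTop ℕ∞) := by decide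

lemma pd3_congr {f g : V3 → ℝ} {x : V3} (i : Fin 3) (h : f =ᶠ[nhds x] g) :
    pd3 i f x = pd3 i g x := by
  unfold pd3; rw [h.fderiv_eq]

lemma eqOn_eventuallyEq {f g : V3 → ℝ} {S : Set V3} (hS : IsOpen S)
    (h : ∀ y ∈ S, f y = g y) {x : V3} (hx : x ∈ S) : f =ᶠ[nhds x] g := by
  filter_upwards [hS.mem_nhds hx] with y hy using h y hy

lemma pd3_of_hasFDerivAt {f : V3 → ℝ} {f' : V3 →L[ℝ] ℝ} {x : V3}
    (h : HasFDerivAt f f' x) (i : Fin 3) : pd3 i f x = f' (EuclideanSpace.single i 1) := by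
  unfold pd3; rw [h.fderiv]

lemma diffAt_of_contDiffOn {f : V3 → ℝ} {S : Set V3} (hS : IsOpen S)
    (hf : ContDiffOn ℝ ∞ f S) {x : V3} (hx : x ∈ S) : DifferentiableAt ℝ f x :=
  (hf.contDiffAt (hS.mem_nhds hx)).differentiableAt one_le_inf

lemma contDiffOn_pd3 {f : V3 → ℝ} {S : Set V3} (hS : IsOpen S)
    (hf : ContDiffOn ℝ ∞ f S) (i : Fin 3) : ContDiffOn ℝ ∞ (pd3 i f) S := by
  have h1 : ContDiffOn ℝ ∞ (fderiv ℝ f) S := hf.fderiv_of_isOpen hS infp1_le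
  exact h1.clm_apply contDiffOn_const

lemma pd3_add {a b : V3 → ℝ} {x : V3} (i : Fin 3)
    (ha : DifferentiableAt ℝ a x) (hb : DifferentiableAt ℝ b x) :
    pd3 i (fun y => a y + b y) x = pd3 i a x + pd3 i b x := by
  unfold pd3; rw [fderiv_fun_add ha hb]; rfl

lemma pd3_sub {a b : V3 → ℝ} {x : V3} (i : Fin 3)
    (ha : DifferentiableAt ℝ a x) (hb : DifferentiableAt ℝ b x) :
    pd3 i (fun y => a y - b y) x = pd3 i a x - pd3 i b x := by
  unfold pd3; rw [fderiv_fun_sub ha hb]; rfl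

lemma pd3_const {x : V3} (i : Fin 3) (c : ℝ) : pd3 i (fun _ => c) x = 0 := by
  unfold pd3; rw [fderiv_fun_const]; rfl

lemma pd3_const_mul {a : V3 → ℝ} {x : V3} (c : ℝ) (i : Fin 3)
    (ha : DifferentiableAt ℝ a x) :
    pd3 i (fun y => c * a y) x = c * pd3 i a x := by
  unfold pd3; rw [fderiv_const_mul ha]; rfl

lemma pd3_mul {a b : V3 → ℝ} {x : V3} (i : Fin 3)
    (ha : DifferentiableAt ℝ a x) (hb : DifferentiableAt ℝ b x) :
    pd3 i (fun y => a y * b y) x = pd3 i a x * b x + a x * pd3 i b x := by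
  unfold pd3; rw [fderiv_fun_mul ha hb]; simp; ring

lemma pd3_comm {f : V3 → ℝ} {S : Set V3} (hS : IsOpen S)
    (hf : ContDiffOn ℝ ∞ f S) {x : V3} (hx : x ∈ S) (i j : Fin 3) :
    pd3 i (pd3 j f) x = pd3 j (pd3 i f) x := by
  have hfx : ContDiffAt ℝ ∞ f x := hf.contDiffAt (hS.mem_nhds hx)
  have hd : DifferentiableAt ℝ (fderiv ℝ f) x :=
    (hfx.fderiv_right infp1_le).differentiableAt one_le_inf
  have key : ∀ a b : Fin 3, pd3 a (pd3 b f) x =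
      fderiv ℝ (fderiv ℝ f) x (EuclideanSpace.single a 1) (EuclideanSpace.single b 1) := by
    intro a b
    unfold pd3
    rw [fderiv_clm_apply hd (differentiableAt_const _)]
    simp
  rw [key i j, key j i]
  exact hfx.isSymmSndFDerivAt (by simpa using two_le_inf) _ _

lemma hasFDerivAt_norm3 {x : V3} (hx : x ≠ 0) :
    HasFDerivAt (fun y : V3 => ‖y‖) (‖x‖⁻¹ • innerSL ℝ x) x := by
  have h1 : HasFDerivAt (fun y : V3 => ‖y‖ ^ 2) (2 • innerSL ℝ x) x :=
    (hasStrictFDerivAt_norm_sq x).hasFDerivAt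
  have hn : ‖x‖ ≠ 0 := norm_ne_zero_iff.mpr hx
  have hsq : ‖x‖ ^ 2 ≠ 0 := pow_ne_zero _ hn
  have h2 := (Real.hasDerivAt_sqrt hsq).comp_hasFDerivAt x h1
  have h3 : ((fun t => Real.sqrt t) ∘ fun y : V3 => ‖y‖ ^ 2) = fun y : V3 => ‖y‖ := by
    funext y; simp [Function.comp, Real.sqrt_sq (norm_nonneg y)]
  rw [h3] at h2
  refine h2.congr_fderiv ?_
  rw [Real.sqrt_sq (norm_nonneg x)]
  ext v
  simp [smul_smul]
  field_simp

lemma inner_single3 (x : V3) (i : Fin 3) : (innerSL ℝ x) (EuclideanSpace.single i 1) = x i := by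
  simp [EuclideanSpace.inner_single_right]

lemma hasFDerivAt_coord3 (x : V3) (j : Fin 3) :
    HasFDerivAt (fun y : V3 => y j) (EuclideanSpace.proj (𝕜 := ℝ) j) x :=
  (EuclideanSpace.proj (𝕜 := ℝ) j).hasFDerivAt

lemma proj_single3 (i j : Fin 3) :
    (EuclideanSpace.proj (𝕜 := ℝ) j) (EuclideanSpace.single i (1:ℝ))
      = if i = j then (1:ℝ) else 0 := by
  simp [EuclideanSpace.single_apply]
  rcases eq_or_ne i j with h | h <;> simp [h, eq_comm]

lemma pd3_coord3 {x : V3} (i j : Fin 3) :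
    pd3 i (fun y : V3 => y j) x = if i = j then (1:ℝ) else 0 := by
  rw [pd3_of_hasFDerivAt (hasFDerivAt_coord3 x j) i, proj_single3]

lemma hasFDerivAt_comp_norm3 {φ : ℝ → ℝ} {d : ℝ} {x : V3} (hx : x ≠ 0)
    (hφ : HasDerivAt φ d ‖x‖) :
    HasFDerivAt (fun y : V3 => φ ‖y‖) ((d * ‖x‖⁻¹) • innerSL ℝ x) x := by
  have h := hφ.comp_hasFDerivAt x (hasFDerivAt_norm3 hx)
  have h2 : d • ‖x‖⁻¹ • innerSL ℝ x = (d * ‖x‖⁻¹) • innerSL ℝ x := by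
    rw [smul_smul]
  rw [← h2]
  exact h

lemma pd3_comp_norm3 {φ : ℝ → ℝ} {d : ℝ} {x : V3} (hx : x ≠ 0)
    (hφ : HasDerivAt φ d ‖x‖) (i : Fin 3) :
    pd3 i (fun y : V3 => φ ‖y‖) x = d * ‖x‖⁻¹ * x i := by
  rw [pd3_of_hasFDerivAt (hasFDerivAt_comp_norm3 hx hφ) i,
    ContinuousLinearMap.smul_apply, inner_single3, smul_eq_mul]

lemma diffAt_comp_norm3 {φ : ℝ → ℝ} {d : ℝ} {x : V3} (hx : x ≠ 0)
    (hφ : HasDerivAt φ d ‖x‖) : DifferentiableAt ℝ (fun y : V3 => φ ‖y‖) x :=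
  (hasFDerivAt_comp_norm3 hx hφ).differentiableAt

lemma euler_identity (n : ℕ) (P : V3 → ℝ) (hP : ContDiff ℝ ∞ P)
    (hPhom : ∀ t : ℝ, 0 < t → ∀ x : V3, P (t • x) = t ^ n * P x) (x : V3) :
    fderiv ℝ P x x = n * P x := by
  have hline : HasDerivAt (fun t : ℝ => t • x) x 1 := by
    simpa using (hasDerivAt_id (1:ℝ)).smul_const x
  have hPx : HasFDerivAt P (fderiv ℝ P x) ((1:ℝ) • x) := by
    rw [one_smul]
    exact ((hP.differentiable one_le_inf) x).hasFDerivAt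
  have hcomp : HasDerivAt (fun t : ℝ => P (t • x)) (fderiv ℝ P x x) 1 := by
    have := hPx.comp_hasDerivAt 1 hline
    simpa [Function.comp_def] using this
  have heq : (fun t : ℝ => P (t • x)) =ᶠ[nhds 1] fun t : ℝ => t ^ n * P x := by
    filter_upwards [Ioi_mem_nhds (zero_lt_one)] with t ht using hPhom t ht x
  have hpow : HasDerivAt (fun t : ℝ => t ^ n * P x) ((n : ℝ) * P x) 1 := by
    simpa using (hasDerivAt_pow n (1:ℝ)).mul_const (P x)
  have hD := hcomp.deriv
  rw [Filter.EventuallyEq.deriv_eq heq] at hD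
  rw [← hD, hpow.deriv]

lemma sum_coord_pd3 (P : V3 → ℝ) (x : V3) :
    x 0 * pd3 0 P x + x 1 * pd3 1 P x + x 2 * pd3 2 P x = fderiv ℝ P x x := by
  have hx : x = x 0 • EuclideanSpace.single 0 (1:ℝ) + x 1 • EuclideanSpace.single 1 (1:ℝ)
      + x 2 • EuclideanSpace.single 2 (1:ℝ) := by
    ext j
    fin_cases j <;> simp [EuclideanSpace.single_apply]
  have h2 : fderiv ℝ P x x = fderiv ℝ P x (x 0 • EuclideanSpace.single 0 (1:ℝ)
      + x 1 • EuclideanSpace.single 1 (1:ℝ) + x 2 • EuclideanSpace.single 2 (1:ℝ)) := by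
    rw [← hx]
  rw [h2]
  simp [pd3, mul_comm]

lemma sum_coord_sq (x : V3) : x 0 ^ 2 + x 1 ^ 2 + x 2 ^ 2 = ‖x‖ ^ 2 := by
  rw [EuclideanSpace.norm_eq x, Real.sq_sqrt (by positivity)]
  simp [Fin.sum_univ_three, Real.norm_eq_abs, sq_abs]

lemma radial_ode (n : ℕ) (k : ℝ) (ψ : ℝ → ℝ) (hψ : ContDiffOn ℝ ∞ ψ (Set.Ioi (0 : ℝ)))
    (hψode : ∀ ρ : ℝ, 0 < ρ →
      deriv (deriv ψ) ρ + (k ^ 2 - n * (n + 1) / ρ ^ 2) * ψ ρ = 0)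
    (h : ℝ → ℝ) (hh : h = fun ρ => ψ ρ / ρ ^ (n + 1)) :
    ∀ ρ : ℝ, 0 < ρ →
      deriv (deriv h) ρ + (2 * (n : ℝ) + 2) * deriv h ρ / ρ = -k ^ 2 * h ρ := by
  have hdψ : ContDiffOn ℝ ∞ (deriv ψ) (Set.Ioi (0:ℝ)) :=
    hψ.deriv_of_isOpen isOpen_Ioi infp1_le
  have hψd : ∀ ρ : ℝ, 0 < ρ → HasDerivAt ψ (deriv ψ ρ) ρ := fun ρ hρ =>
    ((hψ.contDiffAt (Ioi_mem_nhds hρ)).differentiableAt one_le_inf).hasDerivAt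
  have hψd2 : ∀ ρ : ℝ, 0 < ρ → HasDerivAt (deriv ψ) (deriv (deriv ψ) ρ) ρ := fun ρ hρ =>
    ((hdψ.contDiffAt (Ioi_mem_nhds hρ)).differentiableAt one_le_inf).hasDerivAt
  set F : ℝ → ℝ := fun s => (deriv ψ s * s - ((n : ℝ) + 1) * ψ s) / s ^ (n + 2) with hF
  have hdh : ∀ ρ : ℝ, 0 < ρ → deriv h ρ = F ρ := by
    intro ρ hρ
    have hρ0 : ρ ≠ 0 := ne_of_gt hρ
    have hpow : (ρ : ℝ) ^ (n + 1) ≠ 0 := pow_ne_zero _ hρ0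
    have hd : HasDerivAt h
        ((deriv ψ ρ * ρ ^ (n + 1) - ψ ρ * (((n:ℝ) + 1) * ρ ^ n)) / (ρ ^ (n + 1)) ^ 2) ρ := by
      rw [hh]
      have := (hψd ρ hρ).div (hasDerivAt_pow (n + 1) ρ) hpow
      simpa [Pi.div_def] using this
    rw [hd.deriv, hF]
    field_simp
    ring
  intro ρ hρ
  have hρ0 : ρ ≠ 0 := ne_of_gt hρ
  have hd2 : deriv (deriv h) ρ = deriv F ρ := by
    apply Filter.EventuallyEq.deriv_eq
    filter_upwards [Ioi_mem_nhds hρ] with s hs using hdh s hs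
  have hFd : HasDerivAt F
      (((deriv (deriv ψ) ρ * ρ + deriv ψ ρ - ((n:ℝ) + 1) * deriv ψ ρ) * ρ ^ (n + 2) -
        (deriv ψ ρ * ρ - ((n:ℝ) + 1) * ψ ρ) * (((n:ℝ) + 2) * ρ ^ (n + 1))) /
        (ρ ^ (n + 2)) ^ 2) ρ := by
    have hu : HasDerivAt (fun s => deriv ψ s * s - ((n : ℝ) + 1) * ψ s)
        (deriv (deriv ψ) ρ * ρ + deriv ψ ρ - ((n:ℝ) + 1) * deriv ψ ρ) ρ := by
      have h1 := (hψd2 ρ hρ).mul (hasDerivAt_id ρ)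
      have h2 := (hψd ρ hρ).const_mul ((n : ℝ) + 1)
      simpa [mul_one, Pi.sub_def, Pi.mul_def] using h1.sub h2
    have hv := hasDerivAt_pow (n + 2) ρ
    have := hu.div hv (pow_ne_zero _ hρ0)
    simpa [Pi.div_def, hF] using this
  rw [hd2, hFd.deriv, hdh ρ hρ, hF]
  have hc : deriv (deriv ψ) ρ = -(k ^ 2 - n * (n + 1) / ρ ^ 2) * ψ ρ := by
    have := hψode ρ hρ; linarith
  rw [hc, hh]
  field_simp
  ring

lemma lap3_sub {a b : V3 → ℝ} {S : Set V3} (hS : IsOpen S)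
    (ha : ContDiffOn ℝ ∞ a S) (hb : ContDiffOn ℝ ∞ b S) {x : V3} (hx : x ∈ S) :
    lap3 (fun y => a y - b y) x = lap3 a x - lap3 b x := by
  have h1 : ∀ i : Fin 3, ∀ y ∈ S, pd3 i (fun z => a z - b z) y = pd3 i a y - pd3 i b y :=
    fun i y hy => pd3_sub i (diffAt_of_contDiffOn hS ha hy) (diffAt_of_contDiffOn hS hb hy)
  have h2 : ∀ i : Fin 3, pd3 i (pd3 i (fun z => a z - b z)) x
      = pd3 i (pd3 i a) x - pd3 i (pd3 i b) x := by
    intro i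
    rw [pd3_congr i (eqOn_eventuallyEq hS (h1 i) hx)]
    exact pd3_sub i (diffAt_of_contDiffOn hS (contDiffOn_pd3 hS ha i) hx)
      (diffAt_of_contDiffOn hS (contDiffOn_pd3 hS hb i) hx)
  unfold lap3
  rw [h2 0, h2 1, h2 2]
  ring

lemma lap3_pd3_comm {f : V3 → ℝ} {S : Set V3} (hS : IsOpen S)
    (hf : ContDiffOn ℝ ∞ f S) {x : V3} (hx : x ∈ S) (j : Fin 3) :
    lap3 (pd3 j f) x = pd3 j (fun y => lap3 f y) x := by
  have hswap : ∀ i : Fin 3, pd3 i (pd3 i (pd3 j f)) x = pd3 j (pd3 i (pd3 i f)) x := by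
    intro i
    have h1 : ∀ y ∈ S, pd3 i (pd3 j f) y = pd3 j (pd3 i f) y := fun y hy =>
      pd3_comm hS hf hy i j
    have h2 : pd3 i (pd3 i (pd3 j f)) x = pd3 i (pd3 j (pd3 i f)) x :=
      pd3_congr i (eqOn_eventuallyEq hS h1 hx)
    rw [h2, pd3_comm hS (contDiffOn_pd3 hS hf i) hx i j]
  have hcd : ∀ i : Fin 3, DifferentiableAt ℝ (pd3 i (pd3 i f)) x := fun i =>
    diffAt_of_contDiffOn hS (contDiffOn_pd3 hS (contDiffOn_pd3 hS hf i) i) hx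
  unfold lap3
  rw [hswap 0, hswap 1, hswap 2,
    pd3_add j ((hcd 0).fun_add (hcd 1)) (hcd 2), pd3_add j (hcd 0) (hcd 1)]

lemma div3_curl3 {S : Set V3} (hS : IsOpen S) (u : V3 → Fin 3 → ℝ)
    (hu : ∀ j, ContDiffOn ℝ ∞ (fun y => u y j) S) {x : V3} (hx : x ∈ S) :
    div3 (curl3 u) x = 0 := by
  have hd : ∀ a b : Fin 3, DifferentiableAt ℝ (pd3 a (fun y => u y b)) x := fun a b =>
    diffAt_of_contDiffOn hS (contDiffOn_pd3 hS (hu b) a) hx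
  have e0 : (fun y => curl3 u y 0)
      = fun y => pd3 1 (fun z => u z 2) y - pd3 2 (fun z => u z 1) y := by
    funext y; simp [curl3]
  have e1 : (fun y => curl3 u y 1)
      = fun y => pd3 2 (fun z => u z 0) y - pd3 0 (fun z => u z 2) y := by
    funext y; simp [curl3]
  have e2 : (fun y => curl3 u y 2)
      = fun y => pd3 0 (fun z => u z 1) y - pd3 1 (fun z => u z 0) y := by
    funext y; simp [curl3]
  unfold div3
  rw [e0, e1, e2, pd3_sub _ (hd _ _) (hd _ _), pd3_sub _ (hd _ _) (hd _ _),
    pd3_sub _ (hd _ _) (hd _ _)]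
  have c1 := pd3_comm hS (hu 2) hx 0 1
  have c2 := pd3_comm hS (hu 1) hx 0 2
  have c3 := pd3_comm hS (hu 0) hx 1 2
  linarith

lemma curl3_curl3_comp {S : Set V3} (hS : IsOpen S) (u : V3 → Fin 3 → ℝ)
    (hu : ∀ j, ContDiffOn ℝ ∞ (fun y => u y j) S) {x : V3} (hx : x ∈ S) (i : Fin 3) :
    curl3 (curl3 u) x i = pd3 i (fun y => div3 u y) x - lap3 (fun y => u y i) x := by
  have hd : ∀ a b : Fin 3, DifferentiableAt ℝ (pd3 a (fun y => u y b)) x := fun a b =>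
    diffAt_of_contDiffOn hS (contDiffOn_pd3 hS (hu b) a) hx
  have e0 : (fun y => curl3 u y 0)
      = fun y => pd3 1 (fun z => u z 2) y - pd3 2 (fun z => u z 1) y := by
    funext y; simp [curl3]
  have e1 : (fun y => curl3 u y 1)
      = fun y => pd3 2 (fun z => u z 0) y - pd3 0 (fun z => u z 2) y := by
    funext y; simp [curl3]
  have e2 : (fun y => curl3 u y 2)
      = fun y => pd3 0 (fun z => u z 1) y - pd3 1 (fun z => u z 0) y := by
    funext y; simp [curl3]
  have hdiv : (fun y => div3 u y)
      = fun y => (pd3 0 (fun z => u z 0) y + pd3 1 (fun z => u z 1) y)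
        + pd3 2 (fun z => u z 2) y := by
    funext y; unfold div3; ring
  have hdivpd : ∀ a : Fin 3, pd3 a (fun y => div3 u y) x
      = pd3 a (pd3 0 (fun z => u z 0)) x + pd3 a (pd3 1 (fun z => u z 1)) x
        + pd3 a (pd3 2 (fun z => u z 2)) x := by
    intro a
    rw [hdiv, pd3_add a ((hd _ _).fun_add (hd _ _)) (hd _ _), pd3_add a (hd _ _) (hd _ _)]
  have hcomm : ∀ (a b c : Fin 3),
      pd3 a (pd3 b (fun z => u z c)) x = pd3 b (pd3 a (fun z => u z c)) x := fun a b c =>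
    pd3_comm hS (hu c) hx a b
  fin_cases i
  · have hL : curl3 (curl3 u) x 0
        = pd3 1 (fun y => curl3 u y 2) x - pd3 2 (fun y => curl3 u y 1) x := by
      simp [curl3]
    show curl3 (curl3 u) x 0
        = pd3 0 (fun y => div3 u y) x - lap3 (fun y => u y 0) x
    rw [hL, e2, e1, pd3_sub _ (hd _ _) (hd _ _), pd3_sub _ (hd _ _) (hd _ _), hdivpd 0]
    unfold lap3
    linarith [hcomm 0 1 1, hcomm 0 2 2]
  · have hL : curl3 (curl3 u) x 1
        = pd3 2 (fun y => curl3 u y 0) x - pd3 0 (fun y => curl3 u y 2) x := by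
      simp [curl3]
    show curl3 (curl3 u) x 1
        = pd3 1 (fun y => div3 u y) x - lap3 (fun y => u y 1) x
    rw [hL, e0, e2, pd3_sub _ (hd _ _) (hd _ _), pd3_sub _ (hd _ _) (hd _ _), hdivpd 1]
    unfold lap3
    linarith [hcomm 1 0 0, hcomm 1 2 2]
  · have hL : curl3 (curl3 u) x 2
        = pd3 0 (fun y => curl3 u y 1) x - pd3 1 (fun y => curl3 u y 0) x := by
      simp [curl3]
    show curl3 (curl3 u) x 2
        = pd3 2 (fun y => div3 u y) x - lap3 (fun y => u y 2) x
    rw [hL, e1, e0, pd3_sub _ (hd _ _) (hd _ _), pd3_sub _ (hd _ _) (hd _ _), hdivpd 2]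
    unfold lap3
    linarith [hcomm 2 0 0, hcomm 2 1 1]

lemma curl3_congr_on {u u' : V3 → Fin 3 → ℝ} {S : Set V3} (hS : IsOpen S)
    (h : ∀ y ∈ S, ∀ j, u y j = u' y j) {x : V3} (hx : x ∈ S) (i : Fin 3) :
    curl3 u x i = curl3 u' x i := by
  have hc : ∀ a c : Fin 3, pd3 a (fun y => u y c) x = pd3 a (fun y => u' y c) x := fun a c =>
    pd3_congr a (eqOn_eventuallyEq hS (fun y hy => h y hy c) hx)
  fin_cases i <;> simp [curl3] <;> rw [hc, hc]

lemma div3_congr_on {u u' : V3 → Fin 3 → ℝ} {S : Set V3} (hS : IsOpen S)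
    (h : ∀ y ∈ S, ∀ j, u y j = u' y j) {x : V3} (hx : x ∈ S) :
    div3 u x = div3 u' x := by
  have hc : ∀ a c : Fin 3, pd3 a (fun y => u y c) x = pd3 a (fun y => u' y c) x := fun a c =>
    pd3_congr a (eqOn_eventuallyEq hS (fun y hy => h y hy c) hx)
  unfold div3
  rw [hc 0 0, hc 1 1, hc 2 2]

lemma lap_coordmul {S : Set V3} (hS : IsOpen S) (g : V3 → ℝ) (k : ℝ)
    (hg : ContDiffOn ℝ ∞ g S)
    (hlapg : ∀ y ∈ S, lap3 g y = -k ^ 2 * g y) (j : Fin 3) :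
    ∀ x ∈ S, lap3 (fun z => g z * z j) x = -k ^ 2 * (g x * x j) + 2 * pd3 j g x := by
  intro x hx
  have step1 : ∀ i : Fin 3, ∀ y ∈ S, pd3 i (fun z => g z * z j) y
      = pd3 i g y * y j + g y * (if i = j then (1:ℝ) else 0) := by
    intro i y hy
    rw [pd3_mul i (diffAt_of_contDiffOn hS hg hy) (hasFDerivAt_coord3 y j).differentiableAt,
      pd3_coord3 i j]
  have key : ∀ i : Fin 3, pd3 i (pd3 i (fun z => g z * z j)) x
      = pd3 i (pd3 i g) x * x j + 2 * (pd3 i g x * (if i = j then (1:ℝ) else 0)) := by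
    intro i
    rw [pd3_congr i (eqOn_eventuallyEq hS (step1 i) hx)]
    have d1 : DifferentiableAt ℝ (pd3 i g) x := diffAt_of_contDiffOn hS (contDiffOn_pd3 hS hg i) hx
    have d2 : DifferentiableAt ℝ (fun y : V3 => y j) x := (hasFDerivAt_coord3 x j).differentiableAt
    have d3 : DifferentiableAt ℝ g x := diffAt_of_contDiffOn hS hg hx
    rw [pd3_add i (d1.fun_mul d2) (d3.fun_mul (differentiableAt_const _)),
      pd3_mul i d1 d2, pd3_mul i d3 (differentiableAt_const _),
      pd3_coord3 i j, pd3_const]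
    ring
  have hl := hlapg x hx
  unfold lap3 at hl ⊢
  rw [key 0, key 1, key 2]
  fin_cases j
  · simp
    linear_combination (x 0) * hl
  · simp
    linear_combination (x 1) * hl
  · simp
    linear_combination (x 2) * hl

lemma gfun_eq (n : ℕ) (P : V3 → ℝ)
    (hPhom : ∀ t : ℝ, 0 < t → ∀ x : V3, P (t • x) = t ^ n * P x) (ψ : ℝ → ℝ) :
    ∀ y : V3, y ≠ 0 → debyePot P ψ y / ‖y‖ = P y * (ψ ‖y‖ / ‖y‖ ^ (n + 1)) := by
  intro y hy
  have hr : (0:ℝ) < ‖y‖ := norm_pos_iff.mpr hy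
  have hrne : ‖y‖ ≠ 0 := ne_of_gt hr
  unfold debyePot
  rw [hPhom ‖y‖⁻¹ (inv_pos.mpr hr) y, inv_pow, pow_succ]
  have hpn : (‖y‖:ℝ) ^ n ≠ 0 := pow_ne_zero _ hrne
  field_simp

lemma gfun_cd (n : ℕ) (P : V3 → ℝ) (hP : ContDiff ℝ ∞ P) (ψ : ℝ → ℝ)
    (hψ : ContDiffOn ℝ ∞ ψ (Set.Ioi (0 : ℝ))) :
    ContDiffOn ℝ ∞ (fun y : V3 => P y * (ψ ‖y‖ / ‖y‖ ^ (n + 1))) {y : V3 | y ≠ 0} := by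
  have hhcd : ContDiffOn ℝ ∞ (fun ρ : ℝ => ψ ρ / ρ ^ (n + 1)) (Set.Ioi (0:ℝ)) :=
    hψ.div (contDiff_id.pow _).contDiffOn
      (fun ρ hρ => pow_ne_zero _ (ne_of_gt (mem_Ioi.mp hρ)))
  have hncd : ContDiffOn ℝ ∞ (fun y : V3 => ‖y‖) {y : V3 | y ≠ 0} := fun y hy =>
    (contDiffAt_norm ℝ hy).contDiffWithinAt
  have hmaps : Set.MapsTo (fun y : V3 => ‖y‖) {y : V3 | y ≠ 0} (Set.Ioi (0:ℝ)) :=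
    fun y hy => mem_Ioi.mpr (norm_pos_iff.mpr hy)
  exact hP.contDiffOn.mul (hhcd.comp hncd hmaps)

lemma lap_gfun (n : ℕ) (k : ℝ) (P : V3 → ℝ) (hP : ContDiff ℝ ∞ P)
    (hPharm : ∀ x : V3, lap3 P x = 0)
    (hPhom : ∀ t : ℝ, 0 < t → ∀ x : V3, P (t • x) = t ^ n * P x)
    (ψ : ℝ → ℝ) (hψ : ContDiffOn ℝ ∞ ψ (Set.Ioi (0 : ℝ)))
    (hψode : ∀ ρ : ℝ, 0 < ρ →
      deriv (deriv ψ) ρ + (k ^ 2 - n * (n + 1) / ρ ^ 2) * ψ ρ = 0) :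
    ∀ x : V3, x ≠ 0 →
      lap3 (fun y : V3 => P y * (ψ ‖y‖ / ‖y‖ ^ (n + 1))) x
        = -k ^ 2 * (P x * (ψ ‖x‖ / ‖x‖ ^ (n + 1))) := by
  set h : ℝ → ℝ := fun ρ => ψ ρ / ρ ^ (n + 1) with hhdef
  have hS : IsOpen {y : V3 | y ≠ 0} := isOpen_ne
  have hhcd : ContDiffOn ℝ ∞ h (Set.Ioi (0:ℝ)) :=
    hψ.div (contDiff_id.pow _).contDiffOn
      (fun ρ hρ => pow_ne_zero _ (ne_of_gt (mem_Ioi.mp hρ)))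
  have hdhcd : ContDiffOn ℝ ∞ (deriv h) (Set.Ioi (0:ℝ)) :=
    hhcd.deriv_of_isOpen isOpen_Ioi infp1_le
  have hd1 : ∀ ρ : ℝ, 0 < ρ → HasDerivAt h (deriv h ρ) ρ := fun ρ hρ =>
    ((hhcd.contDiffAt (Ioi_mem_nhds hρ)).differentiableAt one_le_inf).hasDerivAt
  have hd2 : ∀ ρ : ℝ, 0 < ρ → HasDerivAt (deriv h) (deriv (deriv h) ρ) ρ := fun ρ hρ =>
    ((hdhcd.contDiffAt (Ioi_mem_nhds hρ)).differentiableAt one_le_inf).hasDerivAt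
  have hPd : Differentiable ℝ P := hP.differentiable one_le_inf
  have hpdPcd : ∀ i : Fin 3, ContDiff ℝ ∞ (pd3 i P) := by
    intro i
    have : ContDiff ℝ ∞ (fderiv ℝ P) := hP.fderiv_right infp1_le
    exact this.clm_apply contDiff_const
  -- first derivative formula, valid on the punctured space
  have pdg : ∀ y : V3, y ≠ 0 → ∀ i : Fin 3,
      pd3 i (fun z : V3 => P z * h ‖z‖) y
        = pd3 i P y * h ‖y‖ + P y * (deriv h ‖y‖ * ‖y‖⁻¹ * y i) := by
    intro y hy i
    have hry : (0:ℝ) < ‖y‖ := norm_pos_iff.mpr hy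
    have hhN : HasFDerivAt (fun z : V3 => h ‖z‖)
        ((deriv h ‖y‖ * ‖y‖⁻¹) • innerSL ℝ y) y :=
      hasFDerivAt_comp_norm3 hy (hd1 ‖y‖ hry)
    have hPf : HasFDerivAt P (fderiv ℝ P y) y := (hPd y).hasFDerivAt
    have hmul := hPf.fun_mul hhN
    rw [pd3_of_hasFDerivAt hmul i]
    simp [inner_single3, pd3]
    ring
  intro x hx
  have hr : (0:ℝ) < ‖x‖ := norm_pos_iff.mpr hx
  have hrne : ‖x‖ ≠ 0 := ne_of_gt hr
  -- second derivative, per direction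
  have key : ∀ i : Fin 3, pd3 i (pd3 i (fun z : V3 => P z * h ‖z‖)) x
      = pd3 i (pd3 i P) x * h ‖x‖
        + 2 * (pd3 i P x * (deriv h ‖x‖ * ‖x‖⁻¹ * x i))
        + P x * ((deriv (deriv h) ‖x‖ * ‖x‖⁻¹ * x i) * (‖x‖⁻¹ * x i)
          + deriv h ‖x‖ * (‖x‖⁻¹ + x i * (-(‖x‖ ^ 2)⁻¹ * ‖x‖⁻¹ * x i))) := by
    intro i
    have hcong : pd3 i (pd3 i (fun z : V3 => P z * h ‖z‖)) x
        = pd3 i (fun y : V3 => pd3 i P y * h ‖y‖ + P y * (deriv h ‖y‖ * ‖y‖⁻¹ * y i)) x :=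
      pd3_congr i (eqOn_eventuallyEq hS (fun y hy => pdg y hy i) hx)
    rw [hcong]
    have dP : DifferentiableAt ℝ P x := hPd x
    have dpdP : DifferentiableAt ℝ (pd3 i P) x :=
      ((hpdPcd i).differentiable one_le_inf) x
    have dh1 : DifferentiableAt ℝ (fun y : V3 => h ‖y‖) x :=
      diffAt_comp_norm3 hx (hd1 ‖x‖ hr)
    have dh2 : DifferentiableAt ℝ (fun y : V3 => deriv h ‖y‖) x :=
      diffAt_comp_norm3 hx (hd2 ‖x‖ hr)
    have dinv : DifferentiableAt ℝ (fun y : V3 => ‖y‖⁻¹) x :=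
      diffAt_comp_norm3 hx (hasDerivAt_inv hrne)
    have dcoord : DifferentiableAt ℝ (fun y : V3 => y i) x :=
      (hasFDerivAt_coord3 x i).differentiableAt
    rw [pd3_add i (dpdP.fun_mul dh1) (dP.fun_mul ((dh2.fun_mul dinv).fun_mul dcoord)),
      pd3_mul i dpdP dh1,
      pd3_mul i dP ((dh2.fun_mul dinv).fun_mul dcoord),
      pd3_mul i (dh2.fun_mul dinv) dcoord,
      pd3_mul i dh2 dinv,
      pd3_comp_norm3 hx (hd1 ‖x‖ hr) i,
      pd3_comp_norm3 hx (hd2 ‖x‖ hr) i,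
      pd3_comp_norm3 hx (hasDerivAt_inv hrne) i,
      pd3_coord3 i i]
    norm_num
    ring
  have hsum1 : pd3 0 (pd3 0 P) x + pd3 1 (pd3 1 P) x + pd3 2 (pd3 2 P) x = 0 := by
    have := hPharm x; unfold lap3 at this; exact this
  have hsum2 : x 0 * pd3 0 P x + x 1 * pd3 1 P x + x 2 * pd3 2 P x = (n:ℝ) * P x := by
    rw [sum_coord_pd3]; exact euler_identity n P hP hPhom x
  have hsum3 := sum_coord_sq x
  have hode := radial_ode n k ψ hψ hψode h hhdef ‖x‖ hr
  have hb : deriv (deriv h) ‖x‖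
      = -k ^ 2 * h ‖x‖ - (2 * (n:ℝ) + 2) * deriv h ‖x‖ / ‖x‖ := by linarith
  have total : lap3 (fun z : V3 => P z * h ‖z‖) x
      = 0 * h ‖x‖ + 2 * (deriv h ‖x‖ * ‖x‖⁻¹) * ((n:ℝ) * P x)
        + P x * (deriv (deriv h) ‖x‖ * (‖x‖⁻¹ * ‖x‖⁻¹) * ‖x‖ ^ 2
          + deriv h ‖x‖ * (3 * ‖x‖⁻¹ - ((‖x‖ ^ 2)⁻¹ * ‖x‖⁻¹) * ‖x‖ ^ 2)) := by
    unfold lap3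
    rw [key 0, key 1, key 2]
    linear_combination (h ‖x‖) * hsum1 + (2 * (deriv h ‖x‖ * ‖x‖⁻¹)) * hsum2
      + (P x * (deriv (deriv h) ‖x‖ * (‖x‖⁻¹ * ‖x‖⁻¹)
          - deriv h ‖x‖ * ((‖x‖ ^ 2)⁻¹ * ‖x‖⁻¹))) * hsum3
  have hir1 : ‖x‖ * ‖x‖⁻¹ = 1 := mul_inv_cancel₀ hrne
  have hir2 : ‖x‖ ^ 2 * (‖x‖ ^ 2)⁻¹ = 1 := mul_inv_cancel₀ (pow_ne_zero _ hrne)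
  have hode' : deriv (deriv h) ‖x‖ + (2 * (n:ℝ) + 2) * (deriv h ‖x‖ * ‖x‖⁻¹)
      = -k ^ 2 * h ‖x‖ := by
    rw [div_eq_mul_inv] at hode; linarith
  rw [total]
  show _ = -k ^ 2 * (P x * h ‖x‖)
  linear_combination (P x) * hode'
    + (P x * deriv (deriv h) ‖x‖ * (‖x‖ * ‖x‖⁻¹ + 1)) * hir1
    - (P x * deriv h ‖x‖ * ‖x‖⁻¹) * hir2

end AuxLemmas

/-- if `P` is harmonic and positively homogeneous of degree `n` and `ψ`
solves the Riccati–Bessel equation `ψ'' + (k² − n(n+1)/ρ²)ψ = 0`, then the potential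
`q(x) = P(x/|x|)·ψ(|x|)` satisfies `|x|·Δ(q/|x|) = −k²q` on `ℝ³ \ {0}`, and consequently
`M[q] = curl(q·x/|x|)` satisfies `curl curl M[q] = k²·M[q]` and `div M[q] = 0` there. -/
theorem spherical_debye_mode (n : ℕ) (k : ℝ) (hk : k ≠ 0)
    (P : V3 → ℝ) (hP : ContDiff ℝ ∞ P) (hPharm : ∀ x : V3, lap3 P x = 0)
    (hPhom : ∀ t : ℝ, 0 < t → ∀ x : V3, P (t • x) = t ^ n * P x)
    (ψ : ℝ → ℝ) (hψ : ContDiffOn ℝ ∞ ψ (Set.Ioi (0 : ℝ)))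
    (hψode : ∀ ρ : ℝ, 0 < ρ →
      deriv (deriv ψ) ρ + (k ^ 2 - n * (n + 1) / ρ ^ 2) * ψ ρ = 0) :
    ∀ x : V3, x ≠ 0 →
      ‖x‖ * lap3 (fun z => debyePot P ψ z / ‖z‖) x = -k ^ 2 * debyePot P ψ x ∧
      curl3 (curl3 (Msph (debyePot P ψ))) x =
        (fun i => k ^ 2 * Msph (debyePot P ψ) x i) ∧
      div3 (Msph (debyePot P ψ)) x = 0 := by
  intro x hx
  have hS : IsOpen {y : V3 | y ≠ 0} := isOpen_ne
  have hxS : x ∈ {y : V3 | y ≠ 0} := hx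
  have hr : (0:ℝ) < ‖x‖ := norm_pos_iff.mpr hx
  have hrne : ‖x‖ ≠ 0 := ne_of_gt hr
  set g : V3 → ℝ := fun y : V3 => P y * (ψ ‖y‖ / ‖y‖ ^ (n + 1)) with hgdef
  have hgcd : ContDiffOn ℝ ∞ g {y : V3 | y ≠ 0} := gfun_cd n P hP ψ hψ
  have hgeq : ∀ y ∈ {y : V3 | y ≠ 0}, debyePot P ψ y / ‖y‖ = g y := fun y hy =>
    gfun_eq n P hPhom ψ y hy
  have hlapg : ∀ y ∈ {y : V3 | y ≠ 0}, lap3 g y = -k ^ 2 * g y := fun y hy =>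
    lap_gfun n k P hP hPharm hPhom ψ hψ hψode y hy
  -- the vector field w(y) = g(y) · y and its transfer to q·y/|y|
  set W : V3 → Fin 3 → ℝ := fun y j => g y * y j with hWdef
  have hwcd : ∀ j : Fin 3, ContDiffOn ℝ ∞ (fun y => W y j) {y : V3 | y ≠ 0} := fun j =>
    hgcd.mul ((EuclideanSpace.proj (𝕜 := ℝ) j).contDiff.contDiffOn)
  have hUeq : ∀ y ∈ {y : V3 | y ≠ 0}, ∀ j : Fin 3,
      debyePot P ψ y * y j / ‖y‖ = W y j := by
    intro y hy j
    have : debyePot P ψ y * y j / ‖y‖ = (debyePot P ψ y / ‖y‖) * y j := by ring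
    rw [this, hgeq y hy]
  -- Part 1 : the Helmholtz-type equation for the scalar potential
  have part1 : ‖x‖ * lap3 (fun z => debyePot P ψ z / ‖z‖) x = -k ^ 2 * debyePot P ψ x := by
    have hcong : lap3 (fun z => debyePot P ψ z / ‖z‖) x = lap3 g x := by
      have h1 : ∀ i : Fin 3, ∀ y ∈ {y : V3 | y ≠ 0},
          pd3 i (fun z => debyePot P ψ z / ‖z‖) y = pd3 i g y := fun i y hy =>
        pd3_congr i (eqOn_eventuallyEq hS hgeq hy)
      unfold lap3
      rw [pd3_congr 0 (eqOn_eventuallyEq hS (h1 0) hxS),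
        pd3_congr 1 (eqOn_eventuallyEq hS (h1 1) hxS),
        pd3_congr 2 (eqOn_eventuallyEq hS (h1 2) hxS)]
    rw [hcong, hlapg x hxS]
    have hq : g x = debyePot P ψ x / ‖x‖ := (hgeq x hxS).symm
    rw [hq]
    field_simp
  -- transfer of the vector fields
  have hMeq : ∀ y ∈ {y : V3 | y ≠ 0}, ∀ j : Fin 3,
      Msph (debyePot P ψ) y j = curl3 W y j := by
    intro y hy j
    exact curl3_congr_on hS hUeq hy j
  have hMMeq : ∀ y ∈ {y : V3 | y ≠ 0}, ∀ j : Fin 3,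
      curl3 (Msph (debyePot P ψ)) y j = curl3 (curl3 W) y j := by
    intro y hy j
    exact curl3_congr_on hS hMeq hy j
  -- smoothness of the components of curl3 W
  have e0 : (fun y => curl3 W y 0)
      = fun y => pd3 1 (fun z => W z 2) y - pd3 2 (fun z => W z 1) y := by
    funext y; simp [curl3]
  have e1 : (fun y => curl3 W y 1)
      = fun y => pd3 2 (fun z => W z 0) y - pd3 0 (fun z => W z 2) y := by
    funext y; simp [curl3]
  have e2 : (fun y => curl3 W y 2)
      = fun y => pd3 0 (fun z => W z 1) y - pd3 1 (fun z => W z 0) y := by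
    funext y; simp [curl3]
  have hVcd : ∀ j : Fin 3, ContDiffOn ℝ ∞ (fun y => curl3 W y j) {y : V3 | y ≠ 0} := by
    intro j
    fin_cases j
    · show ContDiffOn ℝ ∞ (fun y => curl3 W y 0) {y : V3 | y ≠ 0}
      rw [e0]; exact (contDiffOn_pd3 hS (hwcd 2) 1).sub (contDiffOn_pd3 hS (hwcd 1) 2)
    · show ContDiffOn ℝ ∞ (fun y => curl3 W y 1) {y : V3 | y ≠ 0}
      rw [e1]; exact (contDiffOn_pd3 hS (hwcd 0) 2).sub (contDiffOn_pd3 hS (hwcd 2) 0)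
    · show ContDiffOn ℝ ∞ (fun y => curl3 W y 2) {y : V3 | y ≠ 0}
      rw [e2]; exact (contDiffOn_pd3 hS (hwcd 1) 0).sub (contDiffOn_pd3 hS (hwcd 0) 1)
  have hdivV : ∀ y ∈ {y : V3 | y ≠ 0}, div3 (curl3 W) y = 0 := fun y hy =>
    div3_curl3 hS W hwcd hy
  -- the Laplacian of the components of W
  have hlapw : ∀ j : Fin 3, ∀ y ∈ {y : V3 | y ≠ 0},
      lap3 (fun z => W z j) y = -k ^ 2 * (g y * y j) + 2 * pd3 j g y := fun j =>
    lap_coordmul hS g k hgcd hlapg j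
  -- key computation : pd3 a (lap3 (W · b)) = -k² pd3 a (W · b) + 2 pd3 a pd3 b g
  have compkey : ∀ a b : Fin 3,
      pd3 a (fun y => lap3 (fun z => W z b) y) x
        = -k ^ 2 * pd3 a (fun y => W y b) x + 2 * pd3 a (pd3 b g) x := by
    intro a b
    have hc : pd3 a (fun y => lap3 (fun z => W z b) y) x
        = pd3 a (fun y => -k ^ 2 * (g y * y b) + 2 * pd3 b g y) x :=
      pd3_congr a (eqOn_eventuallyEq hS (hlapw b) hxS)
    have dW : DifferentiableAt ℝ (fun y => g y * y b) x :=
      diffAt_of_contDiffOn hS (hwcd b) hxS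
    have dpg : DifferentiableAt ℝ (pd3 b g) x :=
      diffAt_of_contDiffOn hS (contDiffOn_pd3 hS hgcd b) hxS
    rw [hc, pd3_add a (dW.const_mul _) (dpg.const_mul _),
      pd3_const_mul _ a dW, pd3_const_mul _ a dpg]
  -- main curl-curl computation
  have main : ∀ i : Fin 3, curl3 (curl3 (curl3 W)) x i = k ^ 2 * curl3 W x i := by
    intro i
    have step := curl3_curl3_comp hS (curl3 W) hVcd hxS i
    have hdiv0 : pd3 i (fun y => div3 (curl3 W) y) x = 0 := by
      rw [pd3_congr i (eqOn_eventuallyEq hS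
        (fun y hy => (hdivV y hy : div3 (curl3 W) y = (fun _ : V3 => (0:ℝ)) y)) hxS)]
      exact pd3_const i 0
    rw [step, hdiv0, zero_sub]
    have hgc12 := pd3_comm hS hgcd hxS 1 2
    have hgc01 := pd3_comm hS hgcd hxS 0 1
    have hgc02 := pd3_comm hS hgcd hxS 0 2
    fin_cases i
    · show -lap3 (fun y => curl3 W y 0) x = k ^ 2 * curl3 W x 0
      rw [e0,
        lap3_sub hS (contDiffOn_pd3 hS (hwcd 2) 1) (contDiffOn_pd3 hS (hwcd 1) 2) hxS,
        lap3_pd3_comm hS (hwcd 2) hxS 1, lap3_pd3_comm hS (hwcd 1) hxS 2,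
        compkey 1 2, compkey 2 1]
      have hcv : curl3 W x 0 = pd3 1 (fun z => W z 2) x - pd3 2 (fun z => W z 1) x := by
        simp [curl3]
      rw [hcv]
      linarith [hgc12]
    · show -lap3 (fun y => curl3 W y 1) x = k ^ 2 * curl3 W x 1
      rw [e1,
        lap3_sub hS (contDiffOn_pd3 hS (hwcd 0) 2) (contDiffOn_pd3 hS (hwcd 2) 0) hxS,
        lap3_pd3_comm hS (hwcd 0) hxS 2, lap3_pd3_comm hS (hwcd 2) hxS 0,
        compkey 2 0, compkey 0 2]
      have hcv : curl3 W x 1 = pd3 2 (fun z => W z 0) x - pd3 0 (fun z => W z 2) x := by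
        simp [curl3]
      rw [hcv]
      linarith [hgc02]
    · show -lap3 (fun y => curl3 W y 2) x = k ^ 2 * curl3 W x 2
      rw [e2,
        lap3_sub hS (contDiffOn_pd3 hS (hwcd 1) 0) (contDiffOn_pd3 hS (hwcd 0) 1) hxS,
        lap3_pd3_comm hS (hwcd 1) hxS 0, lap3_pd3_comm hS (hwcd 0) hxS 1,
        compkey 0 1, compkey 1 0]
      have hcv : curl3 W x 2 = pd3 0 (fun z => W z 1) x - pd3 1 (fun z => W z 0) x := by
        simp [curl3]
      rw [hcv]
      linarith [hgc01]
  refine ⟨part1, ?_, ?_⟩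
  · funext i
    have h1 : curl3 (curl3 (Msph (debyePot P ψ))) x i = curl3 (curl3 (curl3 W)) x i :=
      curl3_congr_on hS hMMeq hxS i
    rw [h1, main i, hMeq x hxS i]
  · rw [div3_congr_on hS hMeq hxS]
    exact hdivV x hxS

end
end

section
/- Let n ∈ ℕ, k ∈ ℝ with k ≠ 0, R > 0, let P : ℝ³ → ℝ be harmonic (ΔP = 0) and positively homogeneous of degree n, and let ψ : (0,∞) → ℝ be C^∞ satisfying ψ''(ρ) + (k² − n(n+1)/ρ²)·ψ(ρ) = 0 for all ρ > 0 together with the Dirichlet condition ψ(R) = 0. Define q(x) := P(x/|x|)·ψ(|x|) on ℝ³ \ {0} and M[q] := curl(q·x/|x|). Then M[q](x) = 0 for every x with |x| = R; in particular the field M[q] satisfies the perfectly conducting electric boundary condition M[q] × n = 0 on the sphere of radius R. -/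
noncomputable section

open Real Set
open scoped ContDiff

/-- if moreover `ψ(R) = 0` (Dirichlet condition), then the TE Debye field
`M[q] = curl(q·x/|x|)` vanishes on the sphere `{|x| = R}`; in particular it satisfies the
perfectly conducting electric boundary condition `M[q] × n = 0` there, where `n = x/|x|`
is the outward unit normal. -/
theorem spherical_debye_boundary (n : ℕ) (k : ℝ) (hk : k ≠ 0) (R : ℝ) (hR : 0 < R)
    (P : V3 → ℝ) (hP : ContDiff ℝ ∞ P) (hPharm : ∀ x : V3, lap3 P x = 0)
    (hPhom : ∀ t : ℝ, 0 < t → ∀ x : V3, P (t • x) = t ^ n * P x)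
    (ψ : ℝ → ℝ) (hψ : ContDiffOn ℝ ∞ ψ (Set.Ioi (0 : ℝ)))
    (hψode : ∀ ρ : ℝ, 0 < ρ →
      deriv (deriv ψ) ρ + (k ^ 2 - n * (n + 1) / ρ ^ 2) * ψ ρ = 0)
    (hψR : ψ R = 0) :
    ∀ x : V3, ‖x‖ = R →
      Msph (debyePot P ψ) x = (fun _ => (0 : ℝ)) ∧
      cross3 (Msph (debyePot P ψ) x) (fun i => x i / ‖x‖) = (fun _ => (0 : ℝ)) := by
  intro x hx
  have hx0 : x ≠ 0 := by
    intro h; rw [h, norm_zero] at hx; exact absurd hx.symm (ne_of_gt hR)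
  have hxn : ‖x‖ ≠ 0 := by rw [hx]; exact ne_of_gt hR
  -- derivative of the norm at x
  have hnorm : HasFDerivAt (fun y : V3 => ‖y‖) (‖x‖⁻¹ • innerSL ℝ x) x := by
    have h1 : HasFDerivAt (fun y : V3 => ‖y‖ ^ 2) (2 • innerSL ℝ x) x :=
      (hasStrictFDerivAt_norm_sq x).hasFDerivAt
    have h2 := h1.sqrt (by positivity : ‖x‖ ^ 2 ≠ 0)
    have hfun : (fun y : V3 => Real.sqrt (‖y‖ ^ 2)) = fun y : V3 => ‖y‖ :=
      funext fun y => Real.sqrt_sq (norm_nonneg y)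
    rw [hfun] at h2
    refine h2.congr_fderiv ?_
    rw [Real.sqrt_sq (norm_nonneg x)]
    ext v
    simp only [ContinuousLinearMap.coe_smul', Pi.smul_apply, ContinuousLinearMap.smul_apply,
      smul_eq_mul, two_smul, ContinuousLinearMap.add_apply]
    field_simp
    ring
  -- differentiability of ψ at R
  have hψat : ContDiffAt ℝ ∞ ψ R := hψ.contDiffAt (Ioi_mem_nhds hR)
  have hψd : DifferentiableAt ℝ ψ R := hψat.differentiableAt (by simp)
  -- the radial profile w ρ = ψ ρ / ρ
  set w : ℝ → ℝ := fun ρ => ψ ρ / ρ with hw_def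
  have hwR : w R = 0 := by simp [hw_def, hψR]
  obtain ⟨c, hw⟩ : ∃ c : ℝ, HasDerivAt w c R :=
    ⟨_, hψd.hasDerivAt.div (hasDerivAt_id R) (ne_of_gt hR)⟩
  -- F y = P(‖y‖⁻¹ • y)
  set F : V3 → ℝ := fun y => P (‖y‖⁻¹ • y) with hF_def
  have hFdiff : DifferentiableAt ℝ F x := by
    have h1 : DifferentiableAt ℝ (fun y : V3 => ‖y‖⁻¹ • y) x :=
      (hnorm.differentiableAt.inv hxn).smul differentiableAt_id
    exact ((hP.differentiable (by simp)).differentiableAt).comp x h1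
  -- key computation of all partial derivatives on the sphere
  have key : ∀ i j : Fin 3, pd3 j (fun y => debyePot P ψ y * y i / ‖y‖) x
      = (F x * c * R⁻¹) * x i * x j := by
    intro i j
    -- derivative of y ↦ w ‖y‖
    have h1 : HasFDerivAt (fun y : V3 => w ‖y‖) (c • (‖x‖⁻¹ • innerSL ℝ x)) x := by
      have := hw.comp_hasFDerivAt_of_eq x hnorm hx.symm
      exact this
    -- derivative of y ↦ y i
    have h2 : HasFDerivAt (fun y : V3 => y i) (EuclideanSpace.proj i (𝕜 := ℝ)) x :=
      (EuclideanSpace.proj i (𝕜 := ℝ)).hasFDerivAt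
    -- product h_i(y) = w ‖y‖ * y i
    have hh := h1.mul h2
    have hu := hFdiff.hasFDerivAt.mul hh
    have hfun : (fun y : V3 => debyePot P ψ y * y i / ‖y‖)
        = fun y : V3 => F y * (w ‖y‖ * y i) := by
      funext y
      simp only [debyePot, hF_def, hw_def]
      ring
    have hx0' : w ‖x‖ = 0 := by rw [hx]; exact hwR
    rw [pd3, hfun, (show HasFDerivAt (fun y : V3 => F y * (w ‖y‖ * y i)) _ x from hu).fderiv]
    simp only [ContinuousLinearMap.add_apply, ContinuousLinearMap.smul_apply,
      ContinuousLinearMap.smul_apply, smul_eq_mul, hx0', zero_mul, mul_zero,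
      zero_add, PiLp.proj_apply, innerSL_apply_apply, Pi.mul_apply]
    have hinner : inner ℝ x (EuclideanSpace.single j (1 : ℝ)) = x j := by
      rw [EuclideanSpace.inner_single_right]
      simp
    rw [hinner, hx]
    ring
  have hM : Msph (debyePot P ψ) x = (fun _ => (0 : ℝ)) := by
    funext l
    fin_cases l
    · show pd3 1 (fun y => debyePot P ψ y * y 2 / ‖y‖) x
          - pd3 2 (fun y => debyePot P ψ y * y 1 / ‖y‖) x = 0
      rw [key 2 1, key 1 2]; ring
    · show pd3 2 (fun y => debyePot P ψ y * y 0 / ‖y‖) x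
          - pd3 0 (fun y => debyePot P ψ y * y 2 / ‖y‖) x = 0
      rw [key 0 2, key 2 0]; ring
    · show pd3 0 (fun y => debyePot P ψ y * y 1 / ‖y‖) x
          - pd3 1 (fun y => debyePot P ψ y * y 0 / ‖y‖) x = 0
      rw [key 1 0, key 0 1]; ring
  refine ⟨hM, ?_⟩
  rw [hM]
  funext l
  fin_cases l <;> simp [cross3]

end
end
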